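/- arXiv:1502.06571 — 4 statements merged into one kernel-verified Lean document; each statement's English description precedes it below -/
import Mathlib

section
/- Let ‖·‖ be a norm on ℝ² induced by an inner product and let Q̄ ≥ 1. If 2Q̄·𝓘²_avg(‖·‖) ≤ (Q̄² + 1)·𝓘²_avg(‖·‖ ∘ T) for every T ∈ SL₂(ℝ), then ‖·‖ is Q̄-quasi-conformal. -/
open MeasureTheory Metric

/-- `𝓘^p_avg(s) = ω_n⁻¹ ∫_{S^{n-1}} s(v)^p dH^{n-1}(v)`. -/
noncomputable def Iavg (n : ℕ) (p : ℝ) (s : Seminorm ℝ (EuclideanSpace ℝ (Fin n))) : ℝ :=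
  (volume (ball (0 : EuclideanSpace ℝ (Fin n)) 1)).toReal⁻¹ *
    ∫ v in sphere (0 : EuclideanSpace ℝ (Fin n)) 1, (s v) ^ p ∂(μH[(n : ℝ) - 1])

section Aux

open Set NNReal ENNReal

abbrev E2 := EuclideanSpace ℝ (Fin 2)

lemma lip_sin' : LipschitzWith 1 Real.sin :=
  lipschitzWith_of_nnnorm_deriv_le Real.differentiable_sin fun x => by
    rw [Real.deriv_sin, ← NNReal.coe_le_coe]
    simpa [Real.norm_eq_abs] using Real.abs_cos_le_one x

lemma lip_cos' : LipschitzWith 1 Real.cos :=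
  lipschitzWith_of_nnnorm_deriv_le Real.differentiable_cos fun x => by
    rw [Real.deriv_cos, ← NNReal.coe_le_coe]
    simpa [Real.norm_eq_abs] using Real.abs_sin_le_one x

lemma sphere_norm_sq {v : E2} (h : v ∈ sphere (0:E2) 1) : v 0 ^ 2 + v 1 ^ 2 = 1 := by
  have h1 : ‖v‖ = 1 := by simpa using h
  have := EuclideanSpace.norm_eq v
  rw [h1] at this
  have h2 := Real.sqrt_eq_one.mp this.symm
  simpa [Fin.sum_univ_two, Real.norm_eq_abs, sq_abs] using h2

lemma norm_eq_one_of (v : E2) (h : v 0 ^ 2 + v 1 ^ 2 = 1) : ‖v‖ = 1 := by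
  rw [EuclideanSpace.norm_eq, Real.sqrt_eq_one]
  simpa [Fin.sum_univ_two, Real.norm_eq_abs, sq_abs] using h

noncomputable def circ (θ : ℝ) : E2 := !₂[Real.cos θ, Real.sin θ]

lemma lip_circ : LipschitzWith 2 circ := by
  apply LipschitzWith.of_dist_le_mul
  intro x y
  rw [EuclideanSpace.dist_eq]
  have hc : dist (Real.cos x) (Real.cos y) ≤ dist x y := by simpa using lip_cos'.dist_le_mul x y
  have hs : dist (Real.sin x) (Real.sin y) ≤ dist x y := by simpa using lip_sin'.dist_le_mul x y
  have h0 : dist (circ x 0) (circ y 0) = dist (Real.cos x) (Real.cos y) := rfl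
  have h1 : dist (circ x 1) (circ y 1) = dist (Real.sin x) (Real.sin y) := rfl
  rw [Fin.sum_univ_two, h0, h1]
  have hd : (0:ℝ) ≤ dist x y := dist_nonneg
  rw [show ((2:ℝ≥0):ℝ) * dist x y = Real.sqrt ((2 * dist x y)^2) by
    rw [Real.sqrt_sq (by positivity)]; norm_num]
  apply Real.sqrt_le_sqrt
  nlinarith [@dist_nonneg _ _ (Real.cos x) (Real.cos y), @dist_nonneg _ _ (Real.sin x) (Real.sin y)]

lemma sphere_subset' : sphere (0:E2) 1 ⊆ circ '' (Icc 0 (2*Real.pi)) := by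
  intro v hv
  have h := sphere_norm_sq hv
  have hx : v 0 ∈ Icc (-1:ℝ) 1 := by constructor <;> nlinarith
  have hsq : Real.sqrt (1 - v 0 ^ 2) = |v 1| := by
    rw [show 1 - v 0 ^2 = v 1 ^ 2 by nlinarith, Real.sqrt_sq_eq_abs]
  by_cases hy : 0 ≤ v 1
  · refine ⟨Real.arccos (v 0), ⟨Real.arccos_nonneg _, (Real.arccos_le_pi _).trans (by nlinarith [Real.pi_pos])⟩, ?_⟩
    ext i
    fin_cases i
    · simpa [circ] using Real.cos_arccos hx.1 hx.2
    · show Real.sin (Real.arccos (v 0)) = v 1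
      rw [Real.sin_arccos, hsq, abs_of_nonneg hy]
  · refine ⟨2 * Real.pi - Real.arccos (v 0), ⟨by nlinarith [Real.arccos_le_pi (v 0), Real.pi_pos], by nlinarith [Real.arccos_nonneg (v 0)]⟩, ?_⟩
    ext i
    fin_cases i
    · show Real.cos (2*Real.pi - Real.arccos (v 0)) = v 0
      rw [Real.cos_sub, Real.cos_two_pi, Real.sin_two_pi, Real.cos_arccos hx.1 hx.2]; ring
    · show Real.sin (2*Real.pi - Real.arccos (v 0)) = v 1
      rw [Real.sin_sub, Real.cos_two_pi, Real.sin_two_pi, Real.sin_arccos, hsq, abs_of_neg (not_le.mp hy)]; ring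

lemma H1_sphere_lt_top : μH[(1:ℝ)] (sphere (0:E2) 1) < ⊤ := by
  calc μH[(1:ℝ)] (sphere (0:E2) 1) ≤ μH[(1:ℝ)] (circ '' (Icc 0 (2*Real.pi))) :=
        measure_mono sphere_subset'
    _ ≤ ((2:ℝ≥0) : ℝ≥0∞) ^ (1:ℝ) * μH[(1:ℝ)] (Icc 0 (2*Real.pi)) :=
        lip_circ.hausdorffMeasure_image_le (by norm_num) _
    _ < ⊤ := by
        rw [MeasureTheory.hausdorffMeasure_real]
        exact ENNReal.mul_lt_top (by rw [ENNReal.rpow_one]; exact ENNReal.coe_lt_top) (by simp [Real.volume_Icc]; exact ENNReal.mul_lt_top ENNReal.ofNat_lt_top ENNReal.ofReal_lt_top)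

lemma lip_proj : LipschitzWith 1 (fun v : E2 => v 0) := by
  apply LipschitzWith.of_dist_le_mul
  intro x y
  rw [EuclideanSpace.dist_eq, Fin.sum_univ_two, NNReal.coe_one, one_mul]
  rw [show dist (x 0) (y 0) = Real.sqrt (dist (x 0) (y 0) ^ 2) from (Real.sqrt_sq dist_nonneg).symm]
  apply Real.sqrt_le_sqrt
  nlinarith [sq_nonneg (dist (x 1) (y 1)), Real.sq_sqrt (sq_nonneg (dist (x 0) (y 0)))]

lemma Icc_subset_proj : Icc (-1:ℝ) 1 ⊆ (fun v : E2 => v 0) '' (sphere (0:E2) 1) := by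
  intro x hx
  refine ⟨!₂[x, Real.sqrt (1 - x^2)], ?_, rfl⟩
  rw [mem_sphere_zero_iff_norm]
  apply norm_eq_one_of
  have h1 : (0:ℝ) ≤ 1 - x^2 := by rcases hx with ⟨h1,h2⟩; nlinarith
  show x ^ 2 + Real.sqrt (1 - x^2) ^ 2 = 1
  rw [Real.sq_sqrt h1]; ring

lemma two_le_H1_sphere : (2:ℝ≥0∞) ≤ μH[(1:ℝ)] (sphere (0:E2) 1) := by
  have h1 : μH[(1:ℝ)] ((fun v : E2 => v 0) '' (sphere (0:E2) 1)) ≤ ((1:ℝ≥0):ℝ≥0∞)^(1:ℝ) * μH[(1:ℝ)] (sphere (0:E2) 1) :=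
    lip_proj.hausdorffMeasure_image_le (by norm_num) _
  have h2 : μH[(1:ℝ)] (Icc (-1:ℝ) 1) ≤ μH[(1:ℝ)] ((fun v : E2 => v 0) '' (sphere (0:E2) 1)) :=
    measure_mono Icc_subset_proj
  rw [MeasureTheory.hausdorffMeasure_real] at h2
  simp only [Real.volume_Icc] at h2
  calc (2:ℝ≥0∞) = ENNReal.ofReal (1 - (-1)) := by norm_num
    _ ≤ _ := h2
    _ ≤ _ := by simpa using h1

lemma H1_sphere_pos : 0 < (μH[(1:ℝ)] (sphere (0:E2) 1)).toReal := by
  apply ENNReal.toReal_pos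
  · intro h0
    have h2l := two_le_H1_sphere
    rw [h0] at h2l
    exact absurd h2l (by norm_num)
  · exact H1_sphere_lt_top.ne

noncomputable def Jrot : E2 →ₗ[ℝ] E2 where
  toFun v := !₂[-(v 1), v 0]
  map_add' x y := by ext i; fin_cases i <;> (show _ = _ ; simp [Matrix.cons_val_zero, Matrix.cons_val_one]; try ring)
  map_smul' c x := by ext i; fin_cases i <;> (show _ = _ ; simp; try ring)

lemma Jrot_apply0 (v : E2) : Jrot v 0 = -(v 1) := rfl
lemma Jrot_apply1 (v : E2) : Jrot v 1 = v 0 := rfl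

lemma norm_Jrot (v : E2) : ‖Jrot v‖ = ‖v‖ := by
  rw [EuclideanSpace.norm_eq, EuclideanSpace.norm_eq]
  congr 1
  simp [Fin.sum_univ_two, Jrot_apply0, Jrot_apply1, Real.norm_eq_abs, sq_abs]
  ring

noncomputable def Jequiv : E2 ≃ₗᵢ[ℝ] E2 :=
  { (LinearEquiv.ofLinear Jrot (Jrot.comp (Jrot.comp Jrot))
      (by apply LinearMap.ext; intro v
          show Jrot (Jrot (Jrot (Jrot v))) = v
          ext i; fin_cases i <;> simp [Jrot_apply0, Jrot_apply1])
      (by apply LinearMap.ext; intro v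
          show Jrot (Jrot (Jrot (Jrot v))) = v
          ext i; fin_cases i <;> simp [Jrot_apply0, Jrot_apply1]) : E2 ≃ₗ[ℝ] E2) with
    norm_map' := norm_Jrot }

lemma Jrot_preimage_sphere : ⇑Jrot ⁻¹' (sphere (0:E2) 1) = sphere (0:E2) 1 := by
  ext v
  simp only [mem_preimage, mem_sphere_zero_iff_norm, norm_Jrot]

lemma integral_comp_Jrot (f : E2 → ℝ) :
    ∫ v in sphere (0:E2) 1, f (Jrot v) ∂μH[(1:ℝ)] = ∫ v in sphere (0:E2) 1, f v ∂μH[(1:ℝ)] := by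
  have hmp : MeasurePreserving Jequiv (μH[(1:ℝ)] : Measure E2) μH[(1:ℝ)] :=
    Jequiv.toIsometryEquiv.measurePreserving_hausdorffMeasure 1
  have hemb : MeasurableEmbedding (⇑Jequiv) :=
    Jequiv.toHomeomorph.measurableEmbedding
  have := hmp.setIntegral_preimage_emb hemb f (sphere (0:E2) 1)
  rw [← this, show ⇑Jequiv ⁻¹' (sphere (0:E2) 1) = sphere (0:E2) 1 from Jrot_preimage_sphere]
  rfl

noncomputable def ee (i : Fin 2) : E2 := EuclideanSpace.single i (1:ℝ)

lemma decomp (v : E2) : v = v 0 • ee 0 + v 1 • ee 1 := by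
  ext i
  fin_cases i <;> simp [ee, EuclideanSpace.single_apply]

lemma bilin_expand (c : LinearMap.BilinForm ℝ E2) (v : E2) :
    c v v = v 0^2 * c (ee 0) (ee 0) + v 0 * v 1 * c (ee 0) (ee 1)
      + v 1 * v 0 * c (ee 1) (ee 0) + v 1^2 * c (ee 1) (ee 1) := by
  conv_lhs => rw [decomp v]
  simp only [map_add, _root_.map_smul, LinearMap.add_apply, LinearMap.smul_apply, smul_eq_mul]
  ring

lemma continuous_quad (c : LinearMap.BilinForm ℝ E2) : Continuous fun v : E2 => c v v := by
  have h : (fun v : E2 => c v v) = fun v : E2 =>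
      (EuclideanSpace.proj (0:Fin 2)) v ^2 * c (ee 0) (ee 0)
      + (EuclideanSpace.proj (0:Fin 2)) v * (EuclideanSpace.proj (1:Fin 2)) v * c (ee 0) (ee 1)
      + (EuclideanSpace.proj (1:Fin 2)) v * (EuclideanSpace.proj (0:Fin 2)) v * c (ee 1) (ee 0)
      + (EuclideanSpace.proj (1:Fin 2)) v ^2 * c (ee 1) (ee 1) := by
    funext v; exact bilin_expand c v
  rw [h]
  fun_prop

lemma pointwise_const (c : LinearMap.BilinForm ℝ E2) {v : E2} (hv : v 0 ^2 + v 1 ^2 = 1) :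
    c v v + c (Jrot v) (Jrot v) = c (ee 0) (ee 0) + c (ee 1) (ee 1) := by
  rw [bilin_expand c v, bilin_expand c (Jrot v), Jrot_apply0, Jrot_apply1]
  linear_combination (c (ee 0) (ee 0) + c (ee 1) (ee 1)) * hv

lemma integrableOn_sphere {f : E2 → ℝ} (hf : Continuous f) :
    IntegrableOn f (sphere (0:E2) 1) μH[(1:ℝ)] := by
  obtain ⟨C, hC⟩ := (isCompact_sphere (0:E2) 1).exists_bound_of_continuousOn hf.continuousOn
  exact Measure.integrableOn_of_bounded H1_sphere_lt_top.ne hf.aestronglyMeasurable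
    (ae_restrict_of_forall_mem isClosed_sphere.measurableSet hC)

lemma key_integral (c : LinearMap.BilinForm ℝ E2) {w : E2} (hw : ‖w‖ = 1) :
    ∫ v in sphere (0:E2) 1, c v v ∂μH[(1:ℝ)]
      = (c w w + c (Jrot w) (Jrot w)) * (μH[(1:ℝ)] (sphere (0:E2) 1)).toReal / 2 := by
  set S := sphere (0:E2) 1 with hS
  have hint1 : IntegrableOn (fun v => c v v) S μH[(1:ℝ)] := integrableOn_sphere (continuous_quad c)
  have hJcont : Continuous (⇑Jrot) := Jrot.continuous_of_finiteDimensional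
  have hint2 : IntegrableOn (fun v => c (Jrot v) (Jrot v)) S μH[(1:ℝ)] :=
    integrableOn_sphere ((continuous_quad c).comp hJcont)
  have hsum : ∫ v in S, (c v v + c (Jrot v) (Jrot v)) ∂μH[(1:ℝ)]
      = (c w w + c (Jrot w) (Jrot w)) * (μH[(1:ℝ)] S).toReal := by
    rw [setIntegral_congr_fun isClosed_sphere.measurableSet
      (g := fun _ => c w w + c (Jrot w) (Jrot w)) ?_]
    · rw [setIntegral_const, smul_eq_mul, mul_comm]; rfl
    · intro v hv
      have h1 : v 0 ^2 + v 1 ^2 = 1 := sphere_norm_sq hv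
      have h2 : w 0 ^2 + w 1 ^2 = 1 := sphere_norm_sq (by simpa [hS, mem_sphere_zero_iff_norm] using hw)
      show c v v + c (Jrot v) (Jrot v) = c w w + c (Jrot w) (Jrot w)
      rw [pointwise_const c h1, pointwise_const c h2]
  rw [integral_add hint1 hint2] at hsum
  rw [integral_comp_Jrot (fun v => c v v)] at hsum
  linarith

noncomputable def KK : ℝ :=
  (volume (ball (0:E2) 1)).toReal⁻¹ * ((μH[(1:ℝ)] (sphere (0:E2) 1)).toReal / 2)

lemma KK_pos : 0 < KK := by
  apply _root_.mul_pos
  · rw [inv_pos]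
    exact ENNReal.toReal_pos (measure_ball_pos volume (0:E2) one_pos).ne' measure_ball_lt_top.ne
  · exact div_pos H1_sphere_pos two_pos

lemma Iavg_formula (c : LinearMap.BilinForm ℝ E2) (σ : Seminorm ℝ E2)
    (hσ : ∀ x : E2, σ x = Real.sqrt (c x x)) (hnn : ∀ x : E2, 0 ≤ c x x)
    {w : E2} (hw : ‖w‖ = 1) :
    Iavg 2 2 σ = KK * (c w w + c (Jrot w) (Jrot w)) := by
  have hfn : (fun x : E2 => σ x ^ (2:ℝ)) = fun x => c x x := by
    funext x
    rw [hσ, show (2:ℝ) = ((2:ℕ):ℝ) by norm_num, Real.rpow_natCast, Real.sq_sqrt (hnn x)]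
  unfold Iavg
  rw [show ((2:ℕ):ℝ) - 1 = (1:ℝ) by norm_num]
  rw [show (∫ v in sphere (0:E2) 1, σ v ^ (2:ℝ) ∂μH[(1:ℝ)]) = ∫ v in sphere (0:E2) 1, c v v ∂μH[(1:ℝ)] by rw [hfn]]
  rw [key_integral c hw, KK]
  ring

-- basis and diagonal maps
lemma linindep {w : E2} (hw : ‖w‖ = 1) : LinearIndependent ℝ ![w, Jrot w] := by
  rw [LinearIndependent.pair_iff]
  intro a c hac
  have hsq : w 0 ^2 + w 1 ^2 = 1 := sphere_norm_sq (by simpa [mem_sphere_zero_iff_norm] using hw)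
  have h0 : (a • w + c • Jrot w) 0 = (0:E2) 0 := by rw [hac]
  have h1 : (a • w + c • Jrot w) 1 = (0:E2) 1 := by rw [hac]
  have e0 : a * w 0 + c * (-(w 1)) = 0 := by simpa [Jrot] using h0
  have e1 : a * w 1 + c * w 0 = 0 := by simpa [Jrot] using h1
  constructor
  · linear_combination w 0 * e0 + w 1 * e1 + (-a) * hsq
  · linear_combination (-(w 1)) * e0 + w 0 * e1 + (-c) * hsq

noncomputable def basW {w : E2} (hw : ‖w‖ = 1) : Module.Basis (Fin 2) ℝ E2 :=
  basisOfLinearIndependentOfCardEqFinrank (linindep hw) (by simp [finrank_euclideanSpace_fin])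

lemma basW0 {w : E2} (hw : ‖w‖ = 1) : basW hw 0 = w := by
  rw [basW, coe_basisOfLinearIndependentOfCardEqFinrank]; rfl

lemma basW1 {w : E2} (hw : ‖w‖ = 1) : basW hw 1 = Jrot w := by
  rw [basW, coe_basisOfLinearIndependentOfCardEqFinrank]; rfl

noncomputable def Tmap {w : E2} (hw : ‖w‖ = 1) (t : ℝ) : E2 →ₗ[ℝ] E2 :=
  (basW hw).constr ℝ ![t • w, t⁻¹ • Jrot w]

lemma Tmap_w {w : E2} (hw : ‖w‖ = 1) (t : ℝ) : Tmap hw t w = t • w := by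
  have := Module.Basis.constr_basis (basW hw) ℝ ![t • w, t⁻¹ • Jrot w] 0
  rw [basW0] at this
  simpa [Tmap] using this

lemma Tmap_u {w : E2} (hw : ‖w‖ = 1) (t : ℝ) : Tmap hw t (Jrot w) = t⁻¹ • Jrot w := by
  have := Module.Basis.constr_basis (basW hw) ℝ ![t • w, t⁻¹ • Jrot w] 1
  rw [basW1] at this
  simpa [Tmap] using this

lemma Tmap_det {w : E2} (hw : ‖w‖ = 1) {t : ℝ} (ht : t ≠ 0) : LinearMap.det (Tmap hw t) = 1 := by
  rw [← LinearMap.det_toMatrix (basW hw)]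
  have r0 : (basW hw).repr w = Finsupp.single 0 1 := by
    have := (basW hw).repr_self 0
    rwa [basW0] at this
  have r1 : (basW hw).repr (Jrot w) = Finsupp.single 1 1 := by
    have := (basW hw).repr_self 1
    rwa [basW1] at this
  have hM : LinearMap.toMatrix (basW hw) (basW hw) (Tmap hw t) = !![t, 0; 0, t⁻¹] := by
    ext i j
    rw [LinearMap.toMatrix_apply]
    fin_cases j <;> fin_cases i <;>
      simp [basW0, basW1, Tmap_w, Tmap_u, _root_.map_smul, r0, r1, Finsupp.single_apply,
        Fin.mk_zero, Fin.mk_one]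
  rw [hM, Matrix.det_fin_two_of]
  field_simp
  norm_num

lemma sqrt_div_mul {x y : ℝ} (hx : 0 < x) (hy : 0 < y) :
    Real.sqrt (x/y) * y = Real.sqrt (x*y) := by
  rw [Real.sqrt_div hx.le, Real.sqrt_mul hx.le, div_mul_eq_mul_div, mul_div_assoc, Real.div_sqrt]

end Aux

set_option maxHeartbeats 1000000 in
/-- Let `‖·‖ = s` be a norm on `ℝ²` induced by an inner product (given by a symmetric
positive-definite bilinear form `b` via `s(v) = √(b(v,v))`) and let `Q̄ ≥ 1`. If
`2Q̄·𝓘²_avg(s) ≤ (Q̄² + 1)·𝓘²_avg(s ∘ T)` for every `T ∈ SL₂(ℝ)`, then `s` is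
`Q̄`-quasi-conformal. -/
theorem quasiconformal_of_Iavg_inner_product
    (b : LinearMap.BilinForm ℝ (EuclideanSpace ℝ (Fin 2)))
    (hsymm : ∀ v w : EuclideanSpace ℝ (Fin 2), b v w = b w v)
    (hpos : ∀ v : EuclideanSpace ℝ (Fin 2), v ≠ 0 → 0 < b v v)
    (s : Seminorm ℝ (EuclideanSpace ℝ (Fin 2)))
    (hs : ∀ v : EuclideanSpace ℝ (Fin 2), s v = Real.sqrt (b v v))
    (Q : ℝ) (hQ : 1 ≤ Q)
    (h : ∀ T : EuclideanSpace ℝ (Fin 2) →ₗ[ℝ] EuclideanSpace ℝ (Fin 2),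
      LinearMap.det T = 1 →
        2 * Q * Iavg 2 2 s ≤ (Q ^ 2 + 1) * Iavg 2 2 (s.comp T)) :
    ∀ v w : EuclideanSpace ℝ (Fin 2), ‖v‖ = 1 → ‖w‖ = 1 → s v ≤ Q * s w := by
  have hnn : ∀ x : E2, 0 ≤ b x x := by
    intro x
    rcases eq_or_ne x 0 with rfl | hx
    · simp
    · exact (hpos x hx).le
  -- minimizer of the quadratic form on the sphere
  obtain ⟨w₀, hw₀S, hminOn⟩ := (isCompact_sphere (0:E2) 1).exists_isMinOn
    ⟨ee 0, by rw [mem_sphere_zero_iff_norm]; exact norm_eq_one_of _ (by simp [ee, EuclideanSpace.single_apply])⟩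
    (continuous_quad b).continuousOn
  have hw₀ : ‖w₀‖ = 1 := by simpa using hw₀S
  set u₀ : E2 := Jrot w₀ with hu₀def
  have hu₀ : ‖u₀‖ = 1 := by rw [hu₀def, norm_Jrot]; exact hw₀
  have hmin : ∀ x : E2, ‖x‖ = 1 → b w₀ w₀ ≤ b x x := by
    intro x hx
    exact hminOn (by rwa [mem_sphere_zero_iff_norm])
  set β := b w₀ w₀ with hβdef
  set υ := b u₀ u₀ with hυdef
  set G := b w₀ u₀ with hGdef
  have hβ : 0 < β := hpos w₀ (by intro h0; rw [h0] at hw₀; simp at hw₀)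
  have hυ : 0 < υ := hpos u₀ (by intro h0; rw [h0] at hu₀; simp at hu₀)
  have hw₀sq : w₀ 0 ^2 + w₀ 1 ^2 = 1 := sphere_norm_sq (by rwa [mem_sphere_zero_iff_norm])
  -- orthogonality of w₀ and u₀ = Jrot w₀ with respect to b, by minimality
  have hineq : ∀ t : ℝ, 0 ≤ 2*t*G + t^2*(υ - β) := by
    intro t
    have h1t : (0:ℝ) < 1 + t^2 := by positivity
    set r : ℝ := (Real.sqrt (1 + t^2))⁻¹ with hrdef
    have hr2 : r^2 = (1 + t^2)⁻¹ := by
      rw [hrdef, ← Real.sq_sqrt h1t.le]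
      simp [Real.sq_sqrt h1t.le]
    have hynorm : ‖r • (w₀ + t • u₀)‖ = 1 := by
      apply norm_eq_one_of
      have c0 : (r • (w₀ + t • u₀)) 0 = r * (w₀ 0 + t * (-(w₀ 1))) := rfl
      have c1 : (r • (w₀ + t • u₀)) 1 = r * (w₀ 1 + t * (w₀ 0)) := rfl
      rw [c0, c1]
      have : r ^2 * (1 + t^2) = 1 := by rw [hr2]; field_simp
      nlinarith [this, hw₀sq]
    have hby : b (r • (w₀ + t • u₀)) (r • (w₀ + t • u₀))
        = r^2 * (β + 2*t*G + t^2*υ) := by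
      simp only [map_add, _root_.map_smul, LinearMap.add_apply, LinearMap.smul_apply, smul_eq_mul]
      rw [show b u₀ w₀ = G from hsymm u₀ w₀]
      rw [← hβdef, ← hGdef, ← hυdef]
      ring
    have hm := hmin _ hynorm
    rw [hby] at hm
    have hr2' : r^2 * (1 + t^2) = 1 := by rw [hr2]; field_simp
    have hmm : β*(1+t^2) ≤ β+2*t*G+t^2*υ := by
      have h5 := mul_le_mul_of_nonneg_right hm h1t.le
      calc β*(1+t^2) ≤ r^2*(β+2*t*G+t^2*υ)*(1+t^2) := h5
        _ = (β+2*t*G+t^2*υ)*(r^2*(1+t^2)) := by ring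
        _ = β+2*t*G+t^2*υ := by rw [hr2']; ring
    nlinarith [hmm]
  have hG : G = 0 := by
    by_contra hG0
    have hG2 : 0 < G^2 := by positivity
    set sδ : ℝ := (1 + |υ - β|)⁻¹ with hsδdef
    have hsδ : 0 < sδ := by positivity
    have hs1 : sδ * (1 + |υ - β|) = 1 := inv_mul_cancel₀ (by positivity)
    have hsle : sδ * |υ - β| < 1 := by nlinarith [hsδ]
    have hkey := hineq (-(sδ*G))
    have h1 : sδ^2 * G^2 * (υ-β) ≤ sδ^2 * G^2 * |υ-β| :=
      mul_le_mul_of_nonneg_left (le_abs_self _) (by positivity)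
    have h4 : (sδ*G^2)*(sδ*|υ-β|) < (sδ*G^2)*1 :=
      mul_lt_mul_of_pos_left hsle (by positivity)
    nlinarith [hkey, h1, h4, _root_.mul_pos hsδ hG2]
  -- the main inequality applied to diagonal stretches
  have hIs : Iavg 2 2 s = KK * (β + υ) := Iavg_formula b s hs hnn hw₀
  have hmain : ∀ t : ℝ, 0 < t → 2*Q*(β+υ) ≤ (Q^2+1)*(t^2*β + (t^2)⁻¹*υ) := by
    intro t ht
    set T := Tmap hw₀ t with hTdef
    have hdet : LinearMap.det T = 1 := Tmap_det hw₀ ht.ne'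
    have hcomp : Iavg 2 2 (s.comp T) = KK * (t^2*β + (t^2)⁻¹*υ) := by
      have hform := Iavg_formula (b.compl₁₂ T T) (s.comp T)
        (fun x => by rw [Seminorm.comp_apply, hs, LinearMap.compl₁₂_apply])
        (fun x => by rw [LinearMap.compl₁₂_apply]; exact hnn _) hw₀
      rw [hform]
      congr 1
      have hTw : T w₀ = t • w₀ := Tmap_w hw₀ t
      have hTu : T (Jrot w₀) = t⁻¹ • Jrot w₀ := Tmap_u hw₀ t
      rw [LinearMap.compl₁₂_apply, LinearMap.compl₁₂_apply, hTw, hTu]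
      simp only [_root_.map_smul, LinearMap.smul_apply, smul_eq_mul]
      rw [← hu₀def, ← hβdef, ← hυdef]
      field_simp
    have hh := h T hdet
    rw [hIs, hcomp] at hh
    have hgoal : KK * (2*Q*(β+υ)) ≤ KK * ((Q^2+1)*(t^2*β + (t^2)⁻¹*υ)) := by
      calc KK * (2*Q*(β+υ)) = 2*Q*(KK*(β+υ)) := by ring
        _ ≤ (Q^2+1)*(KK*(t^2*β + (t^2)⁻¹*υ)) := hh
        _ = KK * ((Q^2+1)*(t^2*β + (t^2)⁻¹*υ)) := by ring
    exact le_of_mul_le_mul_left hgoal KK_pos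
  -- choose the optimal stretch
  have hβυ : 0 < β * υ := _root_.mul_pos hβ hυ
  set g : ℝ := Real.sqrt (β * υ) with hgdef
  have hg2 : g^2 = β * υ := Real.sq_sqrt hβυ.le
  have hgpos : 0 < g := Real.sqrt_pos.mpr hβυ
  have hup : υ ≤ Q^2 * β := by
    set t : ℝ := Real.sqrt (Real.sqrt (υ/β)) with htdef
    have hdivpos : 0 < υ/β := div_pos hυ hβ
    have ht : 0 < t := Real.sqrt_pos.mpr (Real.sqrt_pos.mpr hdivpos)
    have ht2 : t^2 = Real.sqrt (υ/β) := Real.sq_sqrt (Real.sqrt_nonneg _)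
    have hA : t^2 * β = g := by
      rw [ht2, sqrt_div_mul hυ hβ, hgdef, mul_comm]
    have hB : (t^2)⁻¹ * υ = g := by
      rw [ht2, ← Real.sqrt_inv, inv_div, sqrt_div_mul hβ hυ, hgdef]
    have hm := hmain t ht
    rw [hA, hB] at hm
    have hfin : Q*(β+υ) ≤ (Q^2+1)*g := by nlinarith [hm]
    by_contra hc
    push_neg at hc
    have hgQ : Q*β < g := by
      by_contra hb
      push_neg at hb
      nlinarith [hg2, mul_lt_mul_of_pos_left hc hβ, hgpos, hβ, hQ,
        mul_le_mul hb hb hgpos.le (by positivity)]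
    have hi : Q*β^2 + Q*g^2 ≤ (Q^2+1)*g*β := by
      nlinarith [mul_le_mul_of_nonneg_right hfin hβ.le, hg2]
    have hQgβ : Q*g ≤ β := by
      by_contra hb
      push_neg at hb
      nlinarith [hi, mul_pos (sub_pos.mpr hgQ) (sub_pos.mpr hb)]
    have h6 : Q*(Q*β) < Q*g := mul_lt_mul_of_pos_left hgQ (by linarith)
    nlinarith [hQgβ, h6, hβ, hQ]
  -- conclusion
  intro v w hv hw
  have hvsq : v 0 ^2 + v 1 ^2 = 1 := sphere_norm_sq (by rwa [mem_sphere_zero_iff_norm])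
  set cc : ℝ := v 0 * w₀ 0 + v 1 * w₀ 1 with hccdef
  set dd : ℝ := -(v 0 * w₀ 1) + v 1 * w₀ 0 with hdddef
  have hdec : v = cc • w₀ + dd • u₀ := by
    ext i
    fin_cases i
    · show v 0 = cc * w₀ 0 + dd * (-(w₀ 1))
      rw [hccdef, hdddef]
      linear_combination (-(v 0)) * hw₀sq
    · show v 1 = cc * w₀ 1 + dd * (w₀ 0)
      rw [hccdef, hdddef]
      linear_combination (-(v 1)) * hw₀sq
  have hcd : cc^2 + dd^2 = 1 := by
    rw [hccdef, hdddef]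
    linear_combination (w₀ 0^2 + w₀ 1^2) * hvsq + hw₀sq
  have hbv : b v v = cc^2 * β + dd^2 * υ := by
    conv_lhs => rw [hdec]
    simp only [map_add, _root_.map_smul, LinearMap.add_apply, LinearMap.smul_apply, smul_eq_mul]
    rw [show b u₀ w₀ = G from hsymm u₀ w₀, ← hGdef, ← hβdef, ← hυdef, hG]
    ring
  have hvQ : b v v ≤ Q^2 * β := by
    rw [hbv]
    have h7 : dd^2*υ ≤ dd^2*(Q^2*β) := mul_le_mul_of_nonneg_left hup (sq_nonneg dd)
    have h8 : cc^2*β ≤ cc^2*(Q^2*β) :=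
      mul_le_mul_of_nonneg_left (by nlinarith [hβ, hQ, mul_le_mul hQ hQ zero_le_one (by linarith : (0:ℝ) ≤ Q)]) (sq_nonneg cc)
    calc cc^2*β + dd^2*υ ≤ cc^2*(Q^2*β) + dd^2*(Q^2*β) := by linarith
      _ = (cc^2+dd^2)*(Q^2*β) := by ring
      _ = Q^2*β := by rw [hcd]; ring
  have hwb : β ≤ b w w := hmin w hw
  have hfinal : b v v ≤ Q^2 * b w w := by nlinarith [hvQ, hwb, hQ]
  rw [hs v, hs w]
  calc Real.sqrt (b v v) ≤ Real.sqrt (Q^2 * b w w) := Real.sqrt_le_sqrt hfinal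
    _ = Q * Real.sqrt (b w w) := by
        rw [Real.sqrt_mul (sq_nonneg Q), Real.sqrt_sq (by linarith)]
end

section
/- Let T : ℝ² → ℝ² be a bijective linear map and let s be the norm s(v) := ‖T(v)‖_∞, where ‖(x,y)‖_∞ = max(|x|,|y|). Then s is not Q-quasi-conformal for any Q < √2; equivalently, max{‖T(v)‖_∞ : v ∈ S¹} ≥ √2 · min{‖T(w)‖_∞ : w ∈ S¹}. -/
set_option maxHeartbeats 1600000

open MeasureTheory Metric

private lemma aux_core (P2 Q2 W S T : ℝ) (hS : 0 ≤ S) (hQ : 0 ≤ Q2)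
    (h1 : 4 ≤ P2 * S) (h2 : 4 ≤ Q2 * T) (hpar : S + T ≤ 4 * W) (hPQ : P2 ≤ Q2) :
    2 ≤ Q2 * W := by
  nlinarith [mul_le_mul_of_nonneg_left hpar hQ, mul_le_mul_of_nonneg_right hPQ hS]

private lemma aux_sqrt (a b : ℝ) (ha : 0 ≤ a) (hb : 0 ≤ b) (h : 2 ≤ a ^ 2 * b ^ 2) :
    Real.sqrt 2 ≤ a * b := by
  have h2 : (2 : ℝ) ≤ (a * b) ^ 2 := by nlinarith
  have := Real.sqrt_le_sqrt h2
  rwa [Real.sqrt_sq (by positivity)] at this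

private lemma pos_aux (a b x y : ℝ) (h : a * x + b * y = 1) :
    0 < a ^ 2 + b ^ 2 ∧ 0 < x ^ 2 + y ^ 2 := by
  constructor
  · by_contra hc
    push_neg at hc
    nlinarith [sq_nonneg (a * y - b * x), sq_nonneg x, sq_nonneg y, sq_nonneg a, sq_nonneg b]
  · by_contra hc
    push_neg at hc
    nlinarith [sq_nonneg (a * y - b * x), sq_nonneg x, sq_nonneg y, sq_nonneg a, sq_nonneg b]

private lemma numeric_main (A B C D x1 y1 x2 y2 : ℝ)
    (h1 : A * x1 + B * y1 = 1) (h2 : C * x1 + D * y1 = 1)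
    (h3 : A * x2 + B * y2 = 1) (h4 : C * x2 + D * y2 = -1)
    (hpq : A ^ 2 + B ^ 2 ≤ C ^ 2 + D ^ 2) (hw : x1 ^ 2 + y1 ^ 2 ≤ x2 ^ 2 + y2 ^ 2) :
    2 ≤ (C ^ 2 + D ^ 2) * (x2 ^ 2 + y2 ^ 2) := by
  have hCS1 : 4 ≤ (A ^ 2 + B ^ 2) * ((x1 + x2) ^ 2 + (y1 + y2) ^ 2) := by
    nlinarith [sq_nonneg (A * (y1 + y2) - B * (x1 + x2))]
  have hCS2 : 4 ≤ (C ^ 2 + D ^ 2) * ((x1 - x2) ^ 2 + (y1 - y2) ^ 2) := by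
    nlinarith [sq_nonneg (C * (y1 - y2) - D * (x1 - x2))]
  have hQ0 : (0:ℝ) ≤ C ^ 2 + D ^ 2 := by positivity
  refine aux_core (A ^ 2 + B ^ 2) _ _ ((x1 + x2) ^ 2 + (y1 + y2) ^ 2)
    ((x1 - x2) ^ 2 + (y1 - y2) ^ 2) (by positivity) hQ0 hCS1 hCS2 (by nlinarith) hpq

private lemma key_pair (T : EuclideanSpace ℝ (Fin 2) ≃ₗ[ℝ] EuclideanSpace ℝ (Fin 2)) :
    ∃ v w : EuclideanSpace ℝ (Fin 2), ‖v‖ = 1 ∧ ‖w‖ = 1 ∧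
      Real.sqrt 2 * max |T w 0| |T w 1| ≤ max |T v 0| |T v 1| := by
  classical
  set e0 : EuclideanSpace ℝ (Fin 2) := EuclideanSpace.single 0 1 with he0
  set e1 : EuclideanSpace ℝ (Fin 2) := EuclideanSpace.single 1 1 with he1
  obtain ⟨A, hA⟩ : ∃ a : ℝ, T e0 0 = a := ⟨_, rfl⟩
  obtain ⟨B, hB⟩ : ∃ a : ℝ, T e1 0 = a := ⟨_, rfl⟩
  obtain ⟨C, hC⟩ : ∃ a : ℝ, T e0 1 = a := ⟨_, rfl⟩
  obtain ⟨D, hD⟩ : ∃ a : ℝ, T e1 1 = a := ⟨_, rfl⟩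
  have hbasis : ∀ v : EuclideanSpace ℝ (Fin 2), v = v 0 • e0 + v 1 • e1 := by
    intro v; ext i; fin_cases i <;> simp [he0, he1]
  have hT0 : ∀ v : EuclideanSpace ℝ (Fin 2), T v 0 = A * v 0 + B * v 1 := by
    intro v
    conv_lhs => rw [hbasis v]
    simp [map_add, _root_.map_smul, ← hA, ← hB, mul_comm]
  have hT1 : ∀ v : EuclideanSpace ℝ (Fin 2), T v 1 = C * v 0 + D * v 1 := by
    intro v
    conv_lhs => rw [hbasis v]
    simp [map_add, _root_.map_smul, ← hC, ← hD, mul_comm]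
  -- the two "corner" vectors
  set u1 : EuclideanSpace ℝ (Fin 2) := (WithLp.equiv 2 (Fin 2 → ℝ)).symm ![1, 1] with hu1
  set u2 : EuclideanSpace ℝ (Fin 2) := (WithLp.equiv 2 (Fin 2 → ℝ)).symm ![1, -1] with hu2
  set w1 : EuclideanSpace ℝ (Fin 2) := T.symm u1 with hw1
  set w2 : EuclideanSpace ℝ (Fin 2) := T.symm u2 with hw2
  obtain ⟨x1, hx1⟩ : ∃ a : ℝ, w1 0 = a := ⟨_, rfl⟩
  obtain ⟨y1, hy1⟩ : ∃ a : ℝ, w1 1 = a := ⟨_, rfl⟩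
  obtain ⟨x2, hx2⟩ : ∃ a : ℝ, w2 0 = a := ⟨_, rfl⟩
  obtain ⟨y2, hy2⟩ : ∃ a : ℝ, w2 1 = a := ⟨_, rfl⟩
  have hTw1 : T w1 = u1 := T.apply_symm_apply u1
  have hTw2 : T w2 = u2 := T.apply_symm_apply u2
  have hu1_0 : u1 0 = 1 := by simp [hu1]
  have hu1_1 : u1 1 = 1 := by simp [hu1]
  have hu2_0 : u2 0 = 1 := by simp [hu2]
  have hu2_1 : u2 1 = -1 := by simp [hu2]
  have h1 : A * x1 + B * y1 = 1 := by rw [← hx1, ← hy1, ← hT0 w1, hTw1, hu1_0]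
  have h2 : C * x1 + D * y1 = 1 := by rw [← hx1, ← hy1, ← hT1 w1, hTw1, hu1_1]
  have h3 : A * x2 + B * y2 = 1 := by rw [← hx2, ← hy2, ← hT0 w2, hTw2, hu2_0]
  have h4 : C * x2 + D * y2 = -1 := by rw [← hx2, ← hy2, ← hT1 w2, hTw2, hu2_1]
  -- positivity facts
  obtain ⟨hP2, hW1s⟩ := pos_aux A B x1 y1 h1
  obtain ⟨hQ2, -⟩ := pos_aux C D x1 y1 h2
  obtain ⟨-, hW2s⟩ := pos_aux A B x2 y2 h3
  -- norms
  have hnw1 : ‖w1‖ = Real.sqrt (x1 ^ 2 + y1 ^ 2) := by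
    rw [EuclideanSpace.norm_eq]
    simp [Fin.sum_univ_two, sq_abs, hx1, hy1]
  have hnw2 : ‖w2‖ = Real.sqrt (x2 ^ 2 + y2 ^ 2) := by
    rw [EuclideanSpace.norm_eq]
    simp [Fin.sum_univ_two, sq_abs, hx2, hy2]
  set pv : EuclideanSpace ℝ (Fin 2) := (WithLp.equiv 2 (Fin 2 → ℝ)).symm ![A, B] with hpv
  set qv : EuclideanSpace ℝ (Fin 2) := (WithLp.equiv 2 (Fin 2 → ℝ)).symm ![C, D] with hqv
  have hpv0 : pv 0 = A := by simp [hpv]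
  have hpv1 : pv 1 = B := by simp [hpv]
  have hqv0 : qv 0 = C := by simp [hqv]
  have hqv1 : qv 1 = D := by simp [hqv]
  have hnpv : ‖pv‖ = Real.sqrt (A ^ 2 + B ^ 2) := by
    rw [EuclideanSpace.norm_eq]
    simp [Fin.sum_univ_two, sq_abs, hpv]
  have hnqv : ‖qv‖ = Real.sqrt (C ^ 2 + D ^ 2) := by
    rw [EuclideanSpace.norm_eq]
    simp [Fin.sum_univ_two, sq_abs, hqv]
  set P : ℝ := Real.sqrt (A ^ 2 + B ^ 2) with hP
  set Q : ℝ := Real.sqrt (C ^ 2 + D ^ 2) with hQ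
  set W1 : ℝ := Real.sqrt (x1 ^ 2 + y1 ^ 2) with hW1d
  set W2 : ℝ := Real.sqrt (x2 ^ 2 + y2 ^ 2) with hW2d
  have hPpos : 0 < P := Real.sqrt_pos.mpr hP2
  have hQpos : 0 < Q := Real.sqrt_pos.mpr hQ2
  have hW1pos : 0 < W1 := Real.sqrt_pos.mpr hW1s
  have hW2pos : 0 < W2 := Real.sqrt_pos.mpr hW2s
  have hPsq : P ^ 2 = A ^ 2 + B ^ 2 := Real.sq_sqrt hP2.le
  have hQsq : Q ^ 2 = C ^ 2 + D ^ 2 := Real.sq_sqrt hQ2.le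
  have hW1sq : W1 ^ 2 = x1 ^ 2 + y1 ^ 2 := Real.sq_sqrt hW1s.le
  have hW2sq : W2 ^ 2 = x2 ^ 2 + y2 ^ 2 := Real.sq_sqrt hW2s.le
  -- normalized candidate vectors
  set vP : EuclideanSpace ℝ (Fin 2) := P⁻¹ • pv with hvP
  set vQ : EuclideanSpace ℝ (Fin 2) := Q⁻¹ • qv with hvQ
  set z1 : EuclideanSpace ℝ (Fin 2) := W1⁻¹ • w1 with hz1
  set z2 : EuclideanSpace ℝ (Fin 2) := W2⁻¹ • w2 with hz2
  have hnvP : ‖vP‖ = 1 := by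
    rw [hvP, norm_smul, hnpv, norm_inv, Real.norm_eq_abs, abs_of_pos hPpos,
      inv_mul_cancel₀ hPpos.ne']
  have hnvQ : ‖vQ‖ = 1 := by
    rw [hvQ, norm_smul, hnqv, norm_inv, Real.norm_eq_abs, abs_of_pos hQpos,
      inv_mul_cancel₀ hQpos.ne']
  have hnz1 : ‖z1‖ = 1 := by
    rw [hz1, norm_smul, hnw1, norm_inv, Real.norm_eq_abs, abs_of_pos hW1pos,
      inv_mul_cancel₀ hW1pos.ne']
  have hnz2 : ‖z2‖ = 1 := by
    rw [hz2, norm_smul, hnw2, norm_inv, Real.norm_eq_abs, abs_of_pos hW2pos,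
      inv_mul_cancel₀ hW2pos.ne']
  have hsmul0 : ∀ (c : ℝ) (v : EuclideanSpace ℝ (Fin 2)), (c • v) 0 = c * v 0 := fun _ _ => rfl
  have hsmul1 : ∀ (c : ℝ) (v : EuclideanSpace ℝ (Fin 2)), (c • v) 1 = c * v 1 := fun _ _ => rfl
  -- values at the candidates
  have hsvP : P ≤ max |T vP 0| |T vP 1| := by
    have hval : T vP 0 = P⁻¹ * (A ^ 2 + B ^ 2) := by
      rw [hT0, hvP, hsmul0, hsmul1, hpv0, hpv1]; ring
    have : |T vP 0| = P := by
      rw [hval, ← hPsq, abs_of_pos (by positivity)]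
      field_simp
    rw [← this]; exact le_max_left _ _
  have hsvQ : Q ≤ max |T vQ 0| |T vQ 1| := by
    have hval : T vQ 1 = Q⁻¹ * (C ^ 2 + D ^ 2) := by
      rw [hT1, hvQ, hsmul0, hsmul1, hqv0, hqv1]; ring
    have : |T vQ 1| = Q := by
      rw [hval, ← hQsq, abs_of_pos (by positivity)]
      field_simp
    rw [← this]; exact le_max_right _ _
  have hsz1 : max |T z1 0| |T z1 1| = W1⁻¹ := by
    have e0' : T z1 0 = W1⁻¹ := by
      rw [hz1, _root_.map_smul, hsmul0, hTw1, hu1_0, mul_one]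
    have e1' : T z1 1 = W1⁻¹ := by
      rw [hz1, _root_.map_smul, hsmul1, hTw1, hu1_1, mul_one]
    rw [e0', e1', max_self, abs_of_pos (by positivity)]
  have hsz2 : max |T z2 0| |T z2 1| = W2⁻¹ := by
    have e0' : T z2 0 = W2⁻¹ := by
      rw [hz2, _root_.map_smul, hsmul0, hTw2, hu2_0, mul_one]
    have e1' : T z2 1 = -W2⁻¹ := by
      rw [hz2, _root_.map_smul, hsmul1, hTw2, hu2_1]; ring
    rw [e0', e1', abs_neg, max_self, abs_of_pos (by positivity)]
  have final : ∀ a b : ℝ, Real.sqrt 2 ≤ a * b → 0 < b →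
      Real.sqrt 2 * b⁻¹ ≤ a := by
    intro a b hab hb
    have := mul_le_mul_of_nonneg_right hab (inv_nonneg.mpr hb.le)
    rwa [mul_assoc, mul_inv_cancel₀ hb.ne', mul_one] at this
  rcases le_total P Q with hpq | hpq <;> rcases le_total W1 W2 with hw | hw
  · -- Q, W2 maxima
    refine ⟨vQ, z2, hnvQ, hnz2, ?_⟩
    rw [hsz2]
    have hpq' : A ^ 2 + B ^ 2 ≤ C ^ 2 + D ^ 2 := by
      rw [← hPsq, ← hQsq]; exact pow_le_pow_left₀ hPpos.le hpq 2
    have hw' : x1 ^ 2 + y1 ^ 2 ≤ x2 ^ 2 + y2 ^ 2 := by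
      rw [← hW1sq, ← hW2sq]; exact pow_le_pow_left₀ hW1pos.le hw 2
    have hcore := numeric_main A B C D x1 y1 x2 y2 h1 h2 h3 h4 hpq' hw'
    have : Real.sqrt 2 ≤ Q * W2 :=
      aux_sqrt Q W2 hQpos.le hW2pos.le (by rw [hQsq, hW2sq]; exact hcore)
    exact le_trans (final Q W2 this hW2pos) hsvQ
  · -- Q, W1 maxima : swap (x1,y1) ↔ (x2,y2), negate row (C,D)
    refine ⟨vQ, z1, hnvQ, hnz1, ?_⟩
    rw [hsz1]
    have hpq' : A ^ 2 + B ^ 2 ≤ C ^ 2 + D ^ 2 := by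
      rw [← hPsq, ← hQsq]; exact pow_le_pow_left₀ hPpos.le hpq 2
    have hw' : x2 ^ 2 + y2 ^ 2 ≤ x1 ^ 2 + y1 ^ 2 := by
      rw [← hW1sq, ← hW2sq]; exact pow_le_pow_left₀ hW2pos.le hw 2
    have hcore := numeric_main A B (-C) (-D) x2 y2 x1 y1 h3 (by linarith) h1
      (by linarith) (by simpa using hpq') hw'
    have hcore' : 2 ≤ (C ^ 2 + D ^ 2) * (x1 ^ 2 + y1 ^ 2) := by simpa using hcore
    have : Real.sqrt 2 ≤ Q * W1 :=
      aux_sqrt Q W1 hQpos.le hW1pos.le (by rw [hQsq, hW1sq]; exact hcore')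
    exact le_trans (final Q W1 this hW1pos) hsvQ
  · -- P, W2 maxima : swap rows, negate (x2,y2)
    refine ⟨vP, z2, hnvP, hnz2, ?_⟩
    rw [hsz2]
    have hpq' : C ^ 2 + D ^ 2 ≤ A ^ 2 + B ^ 2 := by
      rw [← hPsq, ← hQsq]; exact pow_le_pow_left₀ hQpos.le hpq 2
    have hw' : x1 ^ 2 + y1 ^ 2 ≤ x2 ^ 2 + y2 ^ 2 := by
      rw [← hW1sq, ← hW2sq]; exact pow_le_pow_left₀ hW1pos.le hw 2
    have hcore := numeric_main C D A B x1 y1 (-x2) (-y2) h2 h1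
      (by linarith) (by linarith) hpq' (by simpa using hw')
    have hcore' : 2 ≤ (A ^ 2 + B ^ 2) * (x2 ^ 2 + y2 ^ 2) := by simpa using hcore
    have : Real.sqrt 2 ≤ P * W2 :=
      aux_sqrt P W2 hPpos.le hW2pos.le (by rw [hPsq, hW2sq]; exact hcore')
    exact le_trans (final P W2 this hW2pos) hsvP
  · -- P, W1 maxima : swap rows and swap w's, negate (x1,y1)
    refine ⟨vP, z1, hnvP, hnz1, ?_⟩
    rw [hsz1]
    have hpq' : C ^ 2 + D ^ 2 ≤ A ^ 2 + B ^ 2 := by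
      rw [← hPsq, ← hQsq]; exact pow_le_pow_left₀ hQpos.le hpq 2
    have hw' : x2 ^ 2 + y2 ^ 2 ≤ x1 ^ 2 + y1 ^ 2 := by
      rw [← hW1sq, ← hW2sq]; exact pow_le_pow_left₀ hW2pos.le hw 2
    have hcore := numeric_main (-C) (-D) A B x2 y2 (-x1) (-y1)
      (by linarith) (by linarith) (by linarith) (by linarith) (by simpa using hpq')
      (by simpa using hw')
    have hcore' : 2 ≤ (A ^ 2 + B ^ 2) * (x1 ^ 2 + y1 ^ 2) := by simpa using hcore
    have : Real.sqrt 2 ≤ P * W1 :=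
      aux_sqrt P W1 hPpos.le hW1pos.le (by rw [hPsq, hW1sq]; exact hcore')
    exact le_trans (final P W1 this hW1pos) hsvP

/-- Let `T : ℝ² → ℝ²` be a bijective linear map and `s(v) = ‖T v‖_∞` (sup-norm). Then
`s` is not `Q`-quasi-conformal for any `Q < √2`; equivalently,
`max{‖T v‖_∞ : v ∈ S¹} ≥ √2 · min{‖T w‖_∞ : w ∈ S¹}`. -/
theorem sup_norm_pullback_not_better_than_sqrt_two
    (T : EuclideanSpace ℝ (Fin 2) ≃ₗ[ℝ] EuclideanSpace ℝ (Fin 2)) :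
    (∀ Q : ℝ,
      (∀ v w : EuclideanSpace ℝ (Fin 2), ‖v‖ = 1 → ‖w‖ = 1 →
        max |T v 0| |T v 1| ≤ Q * max |T w 0| |T w 1|) →
      Real.sqrt 2 ≤ Q) ∧
    Real.sqrt 2 *
        sInf {x : ℝ | ∃ w : EuclideanSpace ℝ (Fin 2), ‖w‖ = 1 ∧ max |T w 0| |T w 1| = x} ≤
      sSup {x : ℝ | ∃ v : EuclideanSpace ℝ (Fin 2), ‖v‖ = 1 ∧ max |T v 0| |T v 1| = x} := by
  obtain ⟨v, w, hv, hw, hkey⟩ := key_pair T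
  have hwpos : 0 < max |T w 0| |T w 1| := by
    rcases lt_or_eq_of_le (le_trans (abs_nonneg (T w 0)) (le_max_left _ _)) with h | h
    · exact h
    · exfalso
      have h0 : |T w 0| = 0 := le_antisymm (le_max_left _ _ |>.trans h.symm.le) (abs_nonneg _)
      have h1 : |T w 1| = 0 := le_antisymm (le_max_right _ _ |>.trans h.symm.le) (abs_nonneg _)
      have hTw : T w = 0 := by
        ext i
        fin_cases i
        · simpa using abs_eq_zero.mp h0
        · simpa using abs_eq_zero.mp h1
      have : w = 0 := (LinearEquiv.map_eq_zero_iff T).mp hTw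
      rw [this] at hw
      simp at hw
  constructor
  · intro Q hQ
    have h := hQ v w hv hw
    have : Real.sqrt 2 * max |T w 0| |T w 1| ≤ Q * max |T w 0| |T w 1| :=
      le_trans hkey h
    exact (mul_le_mul_iff_of_pos_right hwpos).mp this
  · set L : EuclideanSpace ℝ (Fin 2) →L[ℝ] EuclideanSpace ℝ (Fin 2) :=
      LinearMap.toContinuousLinearMap T.toLinearMap with hL
    have hcoord : ∀ (u : EuclideanSpace ℝ (Fin 2)) (i : Fin 2), |u i| ≤ ‖u‖ := by
      intro u i
      rw [EuclideanSpace.norm_eq, ← Real.sqrt_sq_eq_abs]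
      apply Real.sqrt_le_sqrt
      have : ‖u i‖ ^ 2 ≤ ∑ j, ‖u j‖ ^ 2 :=
        Finset.single_le_sum (f := fun j => ‖u j‖ ^ 2) (fun j _ => by positivity)
          (Finset.mem_univ i)
      simpa [Real.norm_eq_abs, sq_abs] using this
    have hbdd : BddAbove {x : ℝ | ∃ v : EuclideanSpace ℝ (Fin 2), ‖v‖ = 1 ∧
        max |T v 0| |T v 1| = x} := by
      refine ⟨‖L‖, ?_⟩
      rintro x ⟨u, hu, rfl⟩
      have hLu : T u = L u := rfl
      have : ‖T u‖ ≤ ‖L‖ := by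
        rw [hLu]
        calc ‖L u‖ ≤ ‖L‖ * ‖u‖ := L.le_opNorm u
          _ = ‖L‖ := by rw [hu, mul_one]
      exact max_le (le_trans (hcoord (T u) 0) this) (le_trans (hcoord (T u) 1) this)
    have hlb : ∀ x ∈ {x : ℝ | ∃ w : EuclideanSpace ℝ (Fin 2), ‖w‖ = 1 ∧
        max |T w 0| |T w 1| = x}, (0:ℝ) ≤ x := by
      rintro x ⟨u, hu, rfl⟩
      exact le_trans (abs_nonneg _) (le_max_left _ _)
    calc Real.sqrt 2 * sInf _
        ≤ Real.sqrt 2 * max |T w 0| |T w 1| := by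
          apply mul_le_mul_of_nonneg_left _ (Real.sqrt_nonneg 2)
          exact csInf_le ⟨0, hlb⟩ ⟨w, hw, rfl⟩
      _ ≤ max |T v 0| |T v 1| := hkey
      _ ≤ sSup _ := le_csSup hbdd ⟨v, hv, rfl⟩
end

section
/- Let n ≥ 1, let Y be a finite-dimensional real normed vector space with norm ‖·‖, let B be the closed Euclidean unit ball in ℝⁿ, let L : ℝⁿ → Y be a linear map, and let ψ : B → Y be a smooth map (C¹ on a neighborhood of B) with ψ(z) = L(z) for every z ∈ ∂B. Then for every p ≥ 1 and every v in the unit sphere S^{n−1}: ω_n·‖L(v)‖^p ≤ ∫_B ‖d_zψ(v)‖^p dL^n(z), where d_zψ denotes the derivative of ψ at z and ω_n = L^n(B). -/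
open MeasureTheory Metric

open Set

lemma slice_core {m : ℕ} {Y : Type*} [NormedAddCommGroup Y] [NormedSpace ℝ Y] [CompleteSpace Y]
    (φ : EuclideanSpace ℝ (Fin (m+1)) → Y) (U : Set (EuclideanSpace ℝ (Fin (m+1))))
    (hU : IsOpen U) (hBU : closedBall 0 1 ⊆ U) (hφ : ContDiffOn ℝ 1 φ U)
    (h0 : ∀ z ∈ sphere (0 : EuclideanSpace ℝ (Fin (m+1))) 1, φ z = 0) :
    ∫ z in closedBall (0 : EuclideanSpace ℝ (Fin (m+1))) 1,
      fderiv ℝ φ z (EuclideanSpace.single 0 1) = 0 := by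
  set e₀ : EuclideanSpace ℝ (Fin (m+1)) := EuclideanSpace.single 0 1 with he₀
  set g : EuclideanSpace ℝ (Fin (m+1)) → Y := fun z => fderiv ℝ φ z e₀ with hg
  set B : Set (EuclideanSpace ℝ (Fin (m+1))) := closedBall 0 1 with hB
  have hBmeas : MeasurableSet B := measurableSet_closedBall
  have hgc : ContinuousOn g U :=
    (hφ.continuousOn_fderiv_of_isOpen hU le_rfl).clm_apply continuousOn_const
  have hgi : IntegrableOn g B := (hgc.mono hBU).integrableOn_compact (isCompact_closedBall 0 1)
  set Θ : (ℝ × (Fin m → ℝ)) ≃ᵐ EuclideanSpace ℝ (Fin (m+1)) :=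
    ((MeasurableEquiv.piFinSuccAbove (fun _ : Fin (m+1) => ℝ) 0).symm).trans
      (MeasurableEquiv.toLp 2 (Fin (m+1) → ℝ)) with hΘdef
  have hΘ : MeasurePreserving Θ :=
    ((EuclideanSpace.volume_preserving_symm_measurableEquiv_toLp (Fin (m+1))).symm).comp
      ((volume_preserving_piFinSuccAbove (fun _ : Fin (m+1) => ℝ) 0).symm)
  have hΘapp : ∀ (t : ℝ) (y : Fin m → ℝ),
      Θ (t, y) = (WithLp.equiv 2 (Fin (m+1) → ℝ)).symm (Fin.insertNth 0 t y) := fun t y => rfl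
  -- norm computation
  have hnorm : ∀ (t : ℝ) (y : Fin m → ℝ),
      ‖Θ (t, y)‖ = Real.sqrt (t ^ 2 + ∑ i, (y i) ^ 2) := by
    intro t y
    rw [hΘapp, EuclideanSpace.norm_eq]
    congr 1
    rw [Fin.sum_univ_succAbove (fun j => ‖(WithLp.equiv 2 (Fin (m+1) → ℝ)).symm
        (Fin.insertNth 0 t y) j‖ ^ 2) 0]
    simp [WithLp.equiv_symm_apply, PiLp.toLp_apply, Real.norm_eq_abs, sq_abs]
  have hmem : ∀ (t : ℝ) (y : Fin m → ℝ), Θ (t, y) ∈ B ↔ t ^ 2 + ∑ i, (y i) ^ 2 ≤ 1 := by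
    intro t y
    rw [hB, mem_closedBall_zero_iff, hnorm, Real.sqrt_le_one]
  -- linearity along the first coordinate
  have hlin : ∀ (t : ℝ) (y : Fin m → ℝ), Θ (t, y) = Θ (0, y) + t • e₀ := by
    intro t y
    rw [hΘapp, hΘapp, he₀, EuclideanSpace.single]
    rw [PiLp.single, WithLp.equiv_symm_apply, ← WithLp.toLp_smul, ← WithLp.toLp_add]
    congr 1
    funext j
    refine Fin.cases ?_ (fun k => ?_) j
    · simp
    · have h1 : (0 : Fin (m+1)).succAbove k = k.succ := Fin.zero_succAbove k
      rw [← h1]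
      simp [Fin.insertNth_apply_succAbove, Pi.single_apply, Fin.succ_ne_zero]
  -- transfer to the product space
  have hind : Integrable (B.indicator g) volume := by
    rwa [integrable_indicator_iff hBmeas]
  have hcomp : Integrable ((B.indicator g) ∘ Θ) volume :=
    (hΘ.integrable_comp_emb Θ.measurableEmbedding).mpr hind
  have hcomp' : Integrable (fun p : ℝ × (Fin m → ℝ) => B.indicator g (Θ p))
      ((volume : Measure ℝ).prod (volume : Measure (Fin m → ℝ))) := by
    rwa [← Measure.volume_eq_prod]
  have main : ∫ z in B, g z
      = ∫ t : ℝ, ∫ y : Fin m → ℝ, B.indicator g (Θ (t, y)) := by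
    rw [← integral_indicator hBmeas, ← hΘ.integral_comp Θ.measurableEmbedding (B.indicator g),
      Measure.volume_eq_prod, integral_prod _ hcomp']
  have inner : ∀ y : Fin m → ℝ, (∫ t : ℝ, B.indicator g (Θ (t, y))) = 0 := by
    intro y
    set r2 : ℝ := ∑ i, (y i) ^ 2 with hr2
    have hr2nn : (0:ℝ) ≤ r2 := by positivity
    have hfun : (fun t : ℝ => B.indicator g (Θ (t, y)))
        = {t : ℝ | t ^ 2 + r2 ≤ 1}.indicator (fun t => g (Θ (t, y))) := by
      funext t
      by_cases h : t ^ 2 + r2 ≤ 1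
      · rw [indicator_of_mem ((hmem t y).mpr h),
          indicator_of_mem (show t ∈ {t : ℝ | t ^ 2 + r2 ≤ 1} from h)]
      · rw [indicator_of_notMem (fun hm => h ((hmem t y).mp hm)),
          indicator_of_notMem (show t ∉ {t : ℝ | t ^ 2 + r2 ≤ 1} from h)]
    rw [hfun]
    by_cases hr : r2 ≤ 1
    · set s : ℝ := Real.sqrt (1 - r2) with hs
      have hs0 : 0 ≤ s := Real.sqrt_nonneg _
      have hs2 : s ^ 2 = 1 - r2 := Real.sq_sqrt (by linarith)
      have hset : {t : ℝ | t ^ 2 + r2 ≤ 1} = Icc (-s) s := by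
        ext t
        simp only [mem_setOf_eq, mem_Icc, ← abs_le]
        constructor
        · intro h
          exact abs_le_of_sq_le_sq (by rw [hs2]; linarith) hs0
        · intro h
          have h2 : t ^ 2 ≤ s ^ 2 := by
            rw [← sq_abs]; exact pow_le_pow_left₀ (abs_nonneg t) h 2
          linarith
      have hcont : ∀ t : ℝ, t ∈ uIcc (-s) s → Θ (t, y) ∈ B := by
        intro t ht
        rw [uIcc_of_le (neg_le_self hs0)] at ht
        rw [hmem]
        have habs : |t| ≤ s := abs_le.mpr ⟨ht.1, ht.2⟩
        have h2 : t ^ 2 ≤ s ^ 2 := by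
          rw [← sq_abs]; exact pow_le_pow_left₀ (abs_nonneg t) habs 2
        linarith
      have hfeq : (fun t : ℝ => φ (Θ (t, y))) = fun t : ℝ => φ (Θ (0, y) + t • e₀) := by
        funext t; rw [hlin]
      have hderiv : ∀ t ∈ uIcc (-s) s,
          HasDerivAt (fun t : ℝ => φ (Θ (t, y))) (g (Θ (t, y))) t := by
        intro t ht
        have hmemU : Θ (t, y) ∈ U := hBU (hcont t ht)
        have hdφ : DifferentiableAt ℝ φ (Θ (t, y)) :=
          (hφ.contDiffAt (hU.mem_nhds hmemU)).differentiableAt one_ne_zero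
        have hcurve : HasDerivAt (fun t : ℝ => Θ (0, y) + t • e₀) e₀ t := by
          simpa using ((hasDerivAt_id t).smul_const e₀).const_add (Θ (0, y))
        rw [hlin t y] at hdφ
        have hc := hdφ.hasFDerivAt.comp_hasDerivAt t hcurve
        rw [hfeq, hg, hlin t y]
        exact hc
      have hint : IntervalIntegrable (fun t : ℝ => g (Θ (t, y))) volume (-s) s := by
        apply ContinuousOn.intervalIntegrable
        have hc1 : Continuous fun t : ℝ => Θ (0, y) + t • e₀ :=
          continuous_const.add (continuous_id.smul continuous_const)
        have hc2 : ContinuousOn (fun t : ℝ => Θ (t, y)) (uIcc (-s) s) := by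
          have := hc1.continuousOn (s := uIcc (-s) s)
          intro t ht
          rw [show (fun t : ℝ => Θ (t, y)) = fun t : ℝ => Θ (0, y) + t • e₀ from
            funext fun t => hlin t y]
          exact this t ht
        exact hgc.comp hc2 fun t ht => hBU (hcont t ht)
      have hsph : ∀ t : ℝ, t ^ 2 + r2 = 1 → φ (Θ (t, y)) = 0 := by
        intro t htr
        refine h0 _ ?_
        rw [mem_sphere_zero_iff_norm, hnorm, htr, Real.sqrt_one]
      rw [hset, integral_indicator measurableSet_Icc, integral_Icc_eq_integral_Ioc,
        ← intervalIntegral.integral_of_le (neg_le_self hs0),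
        intervalIntegral.integral_eq_sub_of_hasDerivAt hderiv hint,
        hsph s (by rw [hs2]; ring), hsph (-s) (by rw [neg_sq, hs2]; ring), sub_zero]
    · have hset : {t : ℝ | t ^ 2 + r2 ≤ 1} = (∅ : Set ℝ) := by
        ext t
        simp only [mem_setOf_eq, mem_empty_iff_false, iff_false, not_le]
        nlinarith [sq_nonneg t]
      rw [hset, indicator_empty, integral_zero]
  have hcomp'' : Integrable
      (Function.uncurry fun (t : ℝ) (y : Fin m → ℝ) => B.indicator g (Θ (t, y)))
      ((volume : Measure ℝ).prod (volume : Measure (Fin m → ℝ))) := by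
    exact hcomp'
  rw [main, integral_integral_swap hcomp'']
  simp [inner]

lemma slice_core_v {m : ℕ} {Y : Type*} [NormedAddCommGroup Y] [NormedSpace ℝ Y] [CompleteSpace Y]
    (φ : EuclideanSpace ℝ (Fin (m+1)) → Y) (U : Set (EuclideanSpace ℝ (Fin (m+1))))
    (hU : IsOpen U) (hBU : closedBall 0 1 ⊆ U) (hφ : ContDiffOn ℝ 1 φ U)
    (h0 : ∀ z ∈ sphere (0 : EuclideanSpace ℝ (Fin (m+1))) 1, φ z = 0)
    (v : EuclideanSpace ℝ (Fin (m+1))) (hv : ‖v‖ = 1) :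
    ∫ z in closedBall (0 : EuclideanSpace ℝ (Fin (m+1))) 1, fderiv ℝ φ z v = 0 := by
  have hortho : Orthonormal ℝ (Set.restrict {(0 : Fin (m+1))} (fun _ => v)) := by
    constructor
    · intro i; exact hv
    · intro i j hij
      exact absurd (Subtype.ext ((i.2 : i.1 ∈ ({0} : Set (Fin (m+1)))).trans
        ((j.2 : j.1 ∈ ({0} : Set (Fin (m+1)))).symm))) hij
  obtain ⟨b, hb⟩ := hortho.exists_orthonormalBasis_extension_of_card_eq (by simp)
  have hb0 : b 0 = v := hb 0 rfl
  set T : EuclideanSpace ℝ (Fin (m+1)) ≃ₗᵢ[ℝ] EuclideanSpace ℝ (Fin (m+1)) := b.repr.symm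
    with hT
  have hTe : T (EuclideanSpace.single 0 1) = v := by
    rw [← hb0]; exact b.repr_symm_single 0
  have hTmp : MeasurePreserving T := T.measurePreserving
  have hTemb : MeasurableEmbedding T := T.toHomeomorph.measurableEmbedding
  have hTball : T ⁻¹' closedBall 0 1 = closedBall (0 : EuclideanSpace ℝ (Fin (m+1))) 1 := by
    ext z
    simp [mem_closedBall_zero_iff, T.norm_map]
  set Tc : EuclideanSpace ℝ (Fin (m+1)) →L[ℝ] EuclideanSpace ℝ (Fin (m+1)) :=
    (T.toContinuousLinearEquiv : EuclideanSpace ℝ (Fin (m+1)) →L[ℝ] EuclideanSpace ℝ (Fin (m+1)))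
    with hTc
  have hTcoe : ⇑Tc = ⇑T := T.coe_toContinuousLinearEquiv
  have hchain : ∀ z ∈ T ⁻¹' U,
      fderiv ℝ (φ ∘ T) z (EuclideanSpace.single 0 1) = fderiv ℝ φ (T z) v := by
    intro z hz
    have hdφ : DifferentiableAt ℝ φ (T z) :=
      (hφ.contDiffAt (hU.mem_nhds hz)).differentiableAt one_ne_zero
    have hTd : HasFDerivAt (⇑T) Tc z := by
      rw [← hTcoe]; exact T.toContinuousLinearEquiv.hasFDerivAt
    have hc : fderiv ℝ (φ ∘ T) z = (fderiv ℝ φ (T z)).comp Tc :=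
      (hdφ.hasFDerivAt.comp z hTd).fderiv
    rw [hc]
    simp only [ContinuousLinearMap.comp_apply]
    rw [show Tc (EuclideanSpace.single 0 1) = v from by rw [← hTe, hTcoe]]
  have hcore := slice_core (φ ∘ T) (T ⁻¹' U) (hU.preimage T.continuous)
    (by rw [← hTball]; exact fun z hz => preimage_mono hBU hz)
    (hφ.comp (T.toContinuousLinearEquiv.contDiff.contDiffOn.congr
      (fun x _ => (congrFun hTcoe x).symm)) (fun x hx => hx))
    (by
      intro z hz
      have : T z ∈ sphere (0 : EuclideanSpace ℝ (Fin (m+1))) 1 := by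
        rw [mem_sphere_zero_iff_norm] at hz ⊢
        rw [T.norm_map]; exact hz
      exact h0 _ this)
  calc ∫ z in closedBall (0 : EuclideanSpace ℝ (Fin (m+1))) 1, fderiv ℝ φ z v
      = ∫ z in T ⁻¹' closedBall 0 1, fderiv ℝ φ (T z) v := by
        rw [hTmp.setIntegral_preimage_emb hTemb (fun z => fderiv ℝ φ z v) (closedBall 0 1)]
    _ = ∫ z in closedBall (0 : EuclideanSpace ℝ (Fin (m+1))) 1,
          fderiv ℝ (φ ∘ T) z (EuclideanSpace.single 0 1) := by
        rw [hTball]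
        refine setIntegral_congr_fun measurableSet_closedBall (fun z hz => ?_)
        exact (hchain z (by rw [← hTball] at *; exact preimage_mono hBU hz)).symm
    _ = 0 := hcore


/-- Let `Y` be a finite-dimensional normed space, `B` the closed Euclidean unit ball in
`ℝⁿ`, `L : ℝⁿ → Y` linear, and `ψ : B → Y` a `C¹` map on a neighborhood of `B` with
`ψ = L` on `∂B`. Then for every `p ≥ 1` and every unit vector `v`:
`ω_n·‖L v‖^p ≤ ∫_B ‖d_zψ(v)‖^p dLⁿ(z)`. -/
theorem directional_quasiconvexity (n : ℕ) (hn : 1 ≤ n)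
    {Y : Type*} [NormedAddCommGroup Y] [NormedSpace ℝ Y] [FiniteDimensional ℝ Y]
    (p : ℝ) (hp : 1 ≤ p)
    (L : EuclideanSpace ℝ (Fin n) →ₗ[ℝ] Y) (ψ : EuclideanSpace ℝ (Fin n) → Y)
    (U : Set (EuclideanSpace ℝ (Fin n))) (hU : IsOpen U)
    (hBU : closedBall (0 : EuclideanSpace ℝ (Fin n)) 1 ⊆ U)
    (hψ : ContDiffOn ℝ 1 ψ U)
    (hbd : ∀ z ∈ sphere (0 : EuclideanSpace ℝ (Fin n)) 1, ψ z = L z)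
    (v : EuclideanSpace ℝ (Fin n)) (hv : ‖v‖ = 1) :
    (volume (closedBall (0 : EuclideanSpace ℝ (Fin n)) 1)).toReal * ‖L v‖ ^ p ≤
      ∫ z in closedBall (0 : EuclideanSpace ℝ (Fin n)) 1, ‖fderiv ℝ ψ z v‖ ^ p := by
  obtain ⟨m, rfl⟩ : ∃ m, n = m + 1 := ⟨n - 1, (Nat.succ_pred_eq_of_pos hn).symm⟩
  set B := closedBall (0 : EuclideanSpace ℝ (Fin (m+1))) 1 with hBdef
  have hmeasB : MeasurableSet B := measurableSet_closedBall
  have hcomp : IsCompact B := isCompact_closedBall 0 1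
  have hvol_lt : volume B < ⊤ := hcomp.measure_lt_top
  have hvol_pos : 0 < volume B :=
    lt_of_lt_of_le (Metric.measure_ball_pos volume 0 one_pos) (measure_mono ball_subset_closedBall)
  set ω : ℝ := (volume B).toReal with hω
  have hω_pos : 0 < ω := ENNReal.toReal_pos hvol_pos.ne' hvol_lt.ne
  set Lc : EuclideanSpace ℝ (Fin (m+1)) →L[ℝ] Y := LinearMap.toContinuousLinearMap L with hLc
  have hLcoe : ∀ z, Lc z = L z := fun z => rfl
  set φ : EuclideanSpace ℝ (Fin (m+1)) → Y := fun z => ψ z - Lc z with hφd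
  have hφC : ContDiffOn ℝ 1 φ U := hψ.sub Lc.contDiff.contDiffOn
  have hφ0 : ∀ z ∈ sphere (0 : EuclideanSpace ℝ (Fin (m+1))) 1, φ z = 0 := fun z hz => by
    simp [hφd, hbd z hz, hLcoe]
  have hzero := slice_core_v φ U hU hBU hφC hφ0 v hv
  have hfd : ∀ z ∈ U, fderiv ℝ ψ z v = fderiv ℝ φ z v + Lc v := by
    intro z hz
    have hψd : DifferentiableAt ℝ ψ z :=
      (hψ.contDiffAt (hU.mem_nhds hz)).differentiableAt one_ne_zero
    have hfs : fderiv ℝ φ z = fderiv ℝ ψ z - Lc := by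
      rw [hφd, fderiv_fun_sub hψd Lc.differentiableAt, Lc.fderiv]
    rw [hfs]; simp
  have hIφ : IntegrableOn (fun z => fderiv ℝ φ z v) B volume :=
    (((hφC.continuousOn_fderiv_of_isOpen hU le_rfl).clm_apply continuousOn_const).mono
      hBU).integrableOn_compact hcomp
  have key : ∫ z in B, fderiv ℝ ψ z v = ω • (L v) := by
    calc ∫ z in B, fderiv ℝ ψ z v = ∫ z in B, (fderiv ℝ φ z v + Lc v) :=
          setIntegral_congr_fun hmeasB fun z hz => hfd z (hBU hz)
      _ = (∫ z in B, fderiv ℝ φ z v) + ∫ z in B, (Lc v : Y) :=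
          integral_add hIφ (integrableOn_const hvol_lt.ne)
      _ = ω • L v := by rw [hzero, zero_add, setIntegral_const, hLcoe, measureReal_def, ← hω]
  set f : EuclideanSpace ℝ (Fin (m+1)) → ℝ := fun z => ‖fderiv ℝ ψ z v‖ with hf
  have hfc : ContinuousOn f U :=
    ((hψ.continuousOn_fderiv_of_isOpen hU le_rfl).clm_apply continuousOn_const).norm
  set μ : Measure (EuclideanSpace ℝ (Fin (m+1))) := volume.restrict B with hμ
  haveI : IsFiniteMeasure μ := ⟨by
    rw [hμ, Measure.restrict_apply_univ]; exact hvol_lt⟩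
  haveI : NeZero μ := ⟨by
    intro h
    have : μ Set.univ = 0 := by rw [h]; rfl
    rw [hμ, Measure.restrict_apply_univ] at this
    exact hvol_pos.ne' this⟩
  have hμuniv : μ Set.univ = volume B := by rw [hμ, Measure.restrict_apply_univ]
  have hfi : Integrable f μ := (hfc.mono hBU).integrableOn_compact hcomp
  have hp0 : (0:ℝ) ≤ p := le_trans zero_le_one hp
  have hgi : Integrable (fun z => f z ^ p) μ :=
    (((hfc.mono hBU).rpow_const fun z _ => Or.inr hp0)).integrableOn_compact hcomp
  have h1 : ω * ‖L v‖ ≤ ∫ z, f z ∂μ := by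
    have hn := norm_integral_le_integral_norm (μ := μ) fun z => fderiv ℝ ψ z v
    rw [show ∫ z, fderiv ℝ ψ z v ∂μ = ω • L v from key] at hn
    calc ω * ‖L v‖ = ‖ω • L v‖ := by
          rw [norm_smul, Real.norm_eq_abs, abs_of_nonneg hω_pos.le]
      _ ≤ _ := hn
  have hjensen : (⨍ z, f z ∂μ) ^ p ≤ ⨍ z, f z ^ p ∂μ := by
    refine (convexOn_rpow hp).map_average_le ?_ isClosed_Ici ?_ hfi hgi
    · intro x hx
      exact (Real.continuousAt_rpow_const x p (Or.inr hp0)).continuousWithinAt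
    · exact Filter.Eventually.of_forall fun z => norm_nonneg _
  have havg : ‖L v‖ ≤ ⨍ z, f z ∂μ := by
    rw [average_eq, measureReal_def, hμuniv, ← hω, smul_eq_mul]
    rw [← mul_le_mul_iff_right₀ hω_pos, ← mul_assoc, mul_inv_cancel₀ hω_pos.ne', one_mul]
    exact h1
  have h2 : ‖L v‖ ^ p ≤ ⨍ z, f z ^ p ∂μ :=
    le_trans (Real.rpow_le_rpow (norm_nonneg _) havg hp0) hjensen
  calc ω * ‖L v‖ ^ p ≤ ω * ⨍ z, f z ^ p ∂μ := by
        exact mul_le_mul_of_nonneg_left h2 hω_pos.le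
    _ = ∫ z, f z ^ p ∂μ := by
        rw [average_eq, measureReal_def, hμuniv, ← hω, smul_eq_mul, ← mul_assoc,
          mul_inv_cancel₀ hω_pos.ne', one_mul]
    _ = ∫ z in B, ‖fderiv ℝ ψ z v‖ ^ p := rfl
end

section
/- Let n ≥ 1, p ≥ 1, let Y be a finite-dimensional real normed vector space with norm ‖·‖, let B be the closed Euclidean unit ball in ℝⁿ, let L : ℝⁿ → Y be a linear map, and let ψ : B → Y be a smooth map (C¹ on a neighborhood of B) with ψ(z) = L(z) for every z ∈ ∂B. Then ω_n·𝓘^p_+(‖·‖ ∘ L) ≤ ∫_B 𝓘^p_+(‖·‖ ∘ d_zψ) dL^n(z), i.e., the functional 𝓘^p_+ is quasi-convex. -/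
open MeasureTheory Metric

/-- `𝓘^p_+(s) = max{s(v)^p : v ∈ S^{n-1}}`, realized as the supremum over the unit sphere. -/
noncomputable def Iplus (n : ℕ) (p : ℝ) (s : Seminorm ℝ (EuclideanSpace ℝ (Fin n))) : ℝ :=
  ⨆ v : sphere (0 : EuclideanSpace ℝ (Fin n)) 1, (s v.1) ^ p

lemma Iplus_comp_clm (n : ℕ) (hn : 1 ≤ n)
    {Y : Type*} [NormedAddCommGroup Y] [NormedSpace ℝ Y]
    (p : ℝ) (hp : 1 ≤ p) (A : EuclideanSpace ℝ (Fin n) →L[ℝ] Y) :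
    Iplus n p ((normSeminorm ℝ Y).comp A.toLinearMap) = ‖A‖ ^ p := by
  haveI : NeZero n := ⟨by omega⟩
  have hp0 : 0 ≤ p := le_trans zero_le_one hp
  have hne : (sphere (0 : EuclideanSpace ℝ (Fin n)) 1).Nonempty :=
    ⟨EuclideanSpace.single 0 1, by simp [mem_sphere_zero_iff_norm, EuclideanSpace.norm_single]⟩
  obtain ⟨w, hw, hwmax'⟩ := (isCompact_sphere (0 : EuclideanSpace ℝ (Fin n)) 1).exists_isMaxOn
    hne ((A.continuous.norm).continuousOn)
  have hwmax : ∀ x ∈ sphere (0 : EuclideanSpace ℝ (Fin n)) 1, ‖A x‖ ≤ ‖A w‖ := hwmax'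
  have hwn : ‖w‖ = 1 := mem_sphere_zero_iff_norm.1 hw
  have hAw : ‖A‖ = ‖A w‖ := by
    refine le_antisymm (A.opNorm_le_bound (norm_nonneg _) fun x => ?_)
      (A.unit_le_opNorm w hwn.le)
    rcases eq_or_ne x 0 with rfl | hx
    · simp
    · have hxn : ‖x‖ ≠ 0 := norm_ne_zero_iff.2 hx
      have hmem : (‖x‖⁻¹ • x) ∈ sphere (0 : EuclideanSpace ℝ (Fin n)) 1 := by
        simp [mem_sphere_zero_iff_norm, norm_smul, abs_of_nonneg (inv_nonneg.2 (norm_nonneg x)),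
          inv_mul_cancel₀ hxn]
      have := hwmax _ hmem
      rw [A.map_smul, norm_smul, norm_inv, norm_norm] at this
      calc ‖A x‖ = ‖x‖ * (‖x‖⁻¹ * ‖A x‖) := by field_simp
        _ ≤ ‖x‖ * ‖A w‖ := by
            exact mul_le_mul_of_nonneg_left (by simpa using this) (norm_nonneg x)
        _ = ‖A w‖ * ‖x‖ := mul_comm _ _
  haveI : Nonempty (sphere (0 : EuclideanSpace ℝ (Fin n)) 1) := hne.to_subtype
  have hbdd : BddAbove (Set.range fun v : sphere (0 : EuclideanSpace ℝ (Fin n)) 1 =>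
      (((normSeminorm ℝ Y).comp A.toLinearMap) v.1) ^ p) := by
    refine ⟨‖A‖ ^ p, Set.forall_mem_range.2 fun v => ?_⟩
    simp only [Seminorm.comp_apply, coe_normSeminorm, ContinuousLinearMap.coe_coe]
    exact Real.rpow_le_rpow (norm_nonneg _)
      (A.unit_le_opNorm v.1 (mem_sphere_zero_iff_norm.1 v.2).le) hp0
  refine le_antisymm (ciSup_le fun v => ?_) ?_
  · simp only [Seminorm.comp_apply, coe_normSeminorm, ContinuousLinearMap.coe_coe]
    exact Real.rpow_le_rpow (norm_nonneg _)
      (A.unit_le_opNorm v.1 (mem_sphere_zero_iff_norm.1 v.2).le) hp0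
  · have := le_ciSup hbdd (⟨w, hw⟩ : sphere (0 : EuclideanSpace ℝ (Fin n)) 1)
    simpa only [Iplus, Seminorm.comp_apply, coe_normSeminorm, ContinuousLinearMap.coe_coe, ← hAw]
      using this

lemma key_zero (m : ℕ) {Y : Type*} [NormedAddCommGroup Y] [NormedSpace ℝ Y] [CompleteSpace Y]
    (L : EuclideanSpace ℝ (Fin (m+1)) →ₗ[ℝ] Y) (ψ : EuclideanSpace ℝ (Fin (m+1)) → Y)
    (U : Set (EuclideanSpace ℝ (Fin (m+1)))) (hU : IsOpen U)
    (hBU : closedBall (0 : EuclideanSpace ℝ (Fin (m+1))) 1 ⊆ U)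
    (hψ : ContDiffOn ℝ 1 ψ U)
    (hbd : ∀ z ∈ sphere (0 : EuclideanSpace ℝ (Fin (m+1))) 1, ψ z = L z) :
    ∫ z in closedBall (0 : EuclideanSpace ℝ (Fin (m+1))) 1,
      (fderiv ℝ ψ z (EuclideanSpace.single 0 1) - L (EuclideanSpace.single 0 1)) = 0 := by
  set B : Set (EuclideanSpace ℝ (Fin (m+1))) := closedBall 0 1 with hBdef
  set u : EuclideanSpace ℝ (Fin (m+1)) := EuclideanSpace.single 0 1 with hudef
  set F : EuclideanSpace ℝ (Fin (m+1)) → Y := fun z => fderiv ℝ ψ z u - L u with hFdef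
  have hcd : ContinuousOn (fderiv ℝ ψ) U := hψ.continuousOn_fderiv_of_isOpen hU le_rfl
  have hdiff : ∀ z ∈ B, DifferentiableAt ℝ ψ z := fun z hz =>
    (hψ.differentiableOn one_ne_zero).differentiableAt (hU.mem_nhds (hBU hz))
  have hFc : ContinuousOn F B :=
    ((hcd.mono hBU).clm_apply continuousOn_const).sub continuousOn_const
  have hFi : IntegrableOn F B := hFc.integrableOn_compact (isCompact_closedBall 0 1)
  have hind : Integrable (B.indicator F) :=
    hFi.integrable_indicator measurableSet_closedBall
  rw [← integral_indicator measurableSet_closedBall]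
  -- transfer to `Fin (m+1) → ℝ`
  set e : (Fin (m+1) → ℝ) ≃ᵐ EuclideanSpace ℝ (Fin (m+1)) :=
    (MeasurableEquiv.toLp 2 (Fin (m+1) → ℝ)) with hedef
  have mpe : MeasurePreserving e :=
    (EuclideanSpace.volume_preserving_symm_measurableEquiv_toLp (Fin (m+1))).symm
  rw [← mpe.integral_comp' (B.indicator F)]
  set e2 : (ℝ × (Fin m → ℝ)) ≃ᵐ (Fin (m+1) → ℝ) :=
    (MeasurableEquiv.piFinSuccAbove (fun _ : Fin (m+1) => ℝ) 0).symm with he2def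
  have mp2 : MeasurePreserving e2 :=
    (volume_preserving_piFinSuccAbove (fun _ : Fin (m+1) => ℝ) 0).symm
  rw [← mp2.integral_comp' (fun x => B.indicator F (e x))]
  have hintg : Integrable (fun q : ℝ × (Fin m → ℝ) => B.indicator F (e (e2 q)))
      (volume.prod volume) := by
    rw [← Measure.volume_eq_prod]
    exact (mp2.integrable_comp_emb e2.measurableEmbedding).2
      ((mpe.integrable_comp_emb e.measurableEmbedding).2 hind)
  rw [Measure.volume_eq_prod, integral_prod_symm _ hintg]
  -- coordinates of the path
  have hz : ∀ (t : ℝ) (y : Fin m → ℝ), e (e2 (t, y)) = e (Fin.cons t y) := by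
    intro t y
    congr 1
    simp [he2def, MeasurableEquiv.piFinSuccAbove_symm_apply, Fin.insertNthEquiv,
      Fin.insertNth_zero']
  have hcoord : ∀ (x : Fin (m+1) → ℝ) (i : Fin (m+1)), (e x) i = x i := by
    intro x i
    rw [hedef]; rfl
  have hnormsq : ∀ x : Fin (m+1) → ℝ, ‖e x‖ = Real.sqrt (∑ i, (x i) ^ 2) := by
    intro x
    rw [EuclideanSpace.norm_eq]
    congr 1
    exact Finset.sum_congr rfl fun i _ => by rw [hcoord, Real.norm_eq_abs, sq_abs]
  have hinner : ∀ y : Fin m → ℝ, (∫ t : ℝ, B.indicator F (e (e2 (t, y)))) = 0 := by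
    intro y
    set S : ℝ := ∑ j, (y j) ^ 2 with hSdef
    have hS0 : 0 ≤ S := by positivity
    set zfun : ℝ → EuclideanSpace ℝ (Fin (m+1)) := fun t => e (Fin.cons t y) with hzf
    have hsum : ∀ t : ℝ, (∑ i, (Fin.cons t y i) ^ 2) = t ^ 2 + S := by
      intro t
      have : (fun i => (Fin.cons t y i) ^ 2) = Fin.cons (t ^ 2) (fun j => (y j) ^ 2) := by
        funext i
        refine Fin.cases ?_ ?_ i <;> simp
      rw [this, Fin.sum_cons]
    have hnormz : ∀ t : ℝ, ‖zfun t‖ = Real.sqrt (t ^ 2 + S) := by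
      intro t; rw [hzf]; rw [hnormsq, hsum]
    have hmem : ∀ t : ℝ, zfun t ∈ B ↔ t ^ 2 + S ≤ 1 := by
      intro t
      rw [hBdef, mem_closedBall_zero_iff, hnormz]
      constructor
      · intro h
        nlinarith [Real.sq_sqrt (by positivity : (0:ℝ) ≤ t ^ 2 + S),
          Real.sqrt_nonneg (t ^ 2 + S)]
      · intro h
        calc Real.sqrt (t ^ 2 + S) ≤ Real.sqrt 1 := Real.sqrt_le_sqrt h
          _ = 1 := Real.sqrt_one
    have hzaff : ∀ t : ℝ, zfun t = zfun 0 + t • u := by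
      intro t
      apply (WithLp.equiv 2 (Fin (m+1) → ℝ)).injective
      funext i
      have h1 : ∀ (w : EuclideanSpace ℝ (Fin (m+1))), WithLp.equiv 2 (Fin (m+1) → ℝ) w i = w i :=
        fun w => rfl
      rw [h1, h1]
      have hadd : (zfun 0 + t • u) i = zfun 0 i + t * u i := rfl
      rw [hadd, hzf]
      simp only [hcoord]
      refine Fin.cases ?_ ?_ i
      · simp [hudef, EuclideanSpace.single_apply]
      · intro j
        simp [hudef, EuclideanSpace.single_apply, Fin.succ_ne_zero]
    have hzcont : Continuous zfun := by
      have : zfun = fun t => zfun 0 + t • u := funext hzaff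
      rw [this]
      exact continuous_const.add (continuous_id.smul continuous_const)
    have hderiv : ∀ t : ℝ, HasDerivAt zfun u t := by
      intro t
      have : zfun = fun t => zfun 0 + t • u := funext hzaff
      rw [this]
      simpa using ((hasDerivAt_id t).smul_const u).const_add (zfun 0)
    by_cases hS1 : S ≤ 1
    · set c : ℝ := Real.sqrt (1 - S) with hcdef
      have hc0 : 0 ≤ c := Real.sqrt_nonneg _
      have hc2 : c ^ 2 = 1 - S := Real.sq_sqrt (by linarith)
      have hsec : ∀ t : ℝ, zfun t ∈ B ↔ t ∈ Set.Icc (-c) c := by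
        intro t
        rw [hmem t]
        constructor
        · intro h
          constructor <;> nlinarith [sq_nonneg (t - c), sq_nonneg (t + c)]
        · rintro ⟨h1, h2⟩
          nlinarith
      have heq : (fun t : ℝ => B.indicator F (e (e2 (t, y)))) =
          (Set.Icc (-c) c).indicator (fun t => F (zfun t)) := by
        funext t
        rw [hz t y]
        show B.indicator F (zfun t) = _
        by_cases h : t ∈ Set.Icc (-c) c
        · rw [Set.indicator_of_mem h, Set.indicator_of_mem ((hsec t).2 h)]
        · rw [Set.indicator_of_notMem h,
            Set.indicator_of_notMem (fun hm => h ((hsec t).1 hm))]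
      rw [heq, integral_indicator measurableSet_Icc, integral_Icc_eq_integral_Ioc,
        ← intervalIntegral.integral_of_le (by linarith : -c ≤ c)]
      have hmemB : ∀ t ∈ Set.uIcc (-c) c, zfun t ∈ B := by
        intro t ht
        rw [Set.uIcc_of_le (by linarith : -c ≤ c)] at ht
        exact (hsec t).2 ht
      set Φ : ℝ → Y := fun t => ψ (zfun t) - t • L u with hΦdef
      have hΦ : ∀ t ∈ Set.uIcc (-c) c, HasDerivAt Φ (F (zfun t)) t := by
        intro t ht
        have h1 : HasDerivAt (fun s => ψ (zfun s)) (fderiv ℝ ψ (zfun t) u) t :=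
          (hdiff _ (hmemB t ht)).hasFDerivAt.comp_hasDerivAt t (hderiv t)
        have h2 : HasDerivAt (fun s : ℝ => s • L u) ((1:ℝ) • L u) t :=
          (hasDerivAt_id t).smul_const _
        simpa [hΦdef, hFdef, one_smul, Pi.sub_def] using h1.sub h2
      have hint : IntervalIntegrable (fun t => F (zfun t)) volume (-c) c := by
        apply ContinuousOn.intervalIntegrable
        exact hFc.comp hzcont.continuousOn hmemB
      rw [intervalIntegral.integral_eq_sub_of_hasDerivAt hΦ hint]
      have hsc : zfun c ∈ sphere (0 : EuclideanSpace ℝ (Fin (m+1))) 1 := by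
        rw [mem_sphere_zero_iff_norm, hnormz]
        rw [hc2]
        simpa using Real.sqrt_one
      have hsc' : zfun (-c) ∈ sphere (0 : EuclideanSpace ℝ (Fin (m+1))) 1 := by
        rw [mem_sphere_zero_iff_norm, hnormz, neg_pow]
        rw [hc2]
        simpa using Real.sqrt_one
      have hb1 : ψ (zfun c) = L (zfun c) := hbd _ hsc
      have hb2 : ψ (zfun (-c)) = L (zfun (-c)) := hbd _ hsc'
      have hdz : zfun c - zfun (-c) = (2 * c) • u := by
        rw [hzaff c, hzaff (-c)]
        module
      have h3 : L (zfun c) - L (zfun (-c)) = (2 * c) • L u := by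
        rw [← map_sub, hdz, L.map_smul]
      have : Φ c - Φ (-c) = (L (zfun c) - L (zfun (-c))) - (2 * c) • L u := by
        rw [hΦdef]
        simp only [hb1, hb2]
        module
      rw [this, h3, sub_self]
    · have : (fun t : ℝ => B.indicator F (e (e2 (t, y)))) = fun _ => 0 := by
        funext t
        rw [hz t y]
        show B.indicator F (zfun t) = 0
        exact Set.indicator_of_notMem (fun hm => hS1 (by nlinarith [(hmem t).1 hm])) F
      rw [this, integral_zero]
  simp only [hinner, integral_zero]

lemma key_dir (m : ℕ) {Y : Type*} [NormedAddCommGroup Y] [NormedSpace ℝ Y] [CompleteSpace Y]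
    (L : EuclideanSpace ℝ (Fin (m+1)) →ₗ[ℝ] Y) (ψ : EuclideanSpace ℝ (Fin (m+1)) → Y)
    (U : Set (EuclideanSpace ℝ (Fin (m+1)))) (hU : IsOpen U)
    (hBU : closedBall (0 : EuclideanSpace ℝ (Fin (m+1))) 1 ⊆ U)
    (hψ : ContDiffOn ℝ 1 ψ U)
    (hbd : ∀ z ∈ sphere (0 : EuclideanSpace ℝ (Fin (m+1))) 1, ψ z = L z)
    (v : EuclideanSpace ℝ (Fin (m+1))) (hv : ‖v‖ = 1) :
    ∫ z in closedBall (0 : EuclideanSpace ℝ (Fin (m+1))) 1, fderiv ℝ ψ z v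
      = (volume (closedBall (0 : EuclideanSpace ℝ (Fin (m+1))) 1)).toReal • L v := by
  have hu : ‖(EuclideanSpace.single (0 : Fin (m+1)) (1:ℝ))‖ = 1 := by
    rw [EuclideanSpace.norm_single]; norm_num
  obtain ⟨O, hO⟩ : ∃ O : EuclideanSpace ℝ (Fin (m+1)) ≃ₗᵢ[ℝ] EuclideanSpace ℝ (Fin (m+1)),
      O (EuclideanSpace.single (0 : Fin (m+1)) (1:ℝ)) = v := by
    by_cases h : (EuclideanSpace.single (0 : Fin (m+1)) (1:ℝ)) = v
    · exact ⟨LinearIsometryEquiv.refl ℝ _, h⟩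
    · exact ⟨Submodule.reflection (ℝ ∙ ((EuclideanSpace.single (0 : Fin (m+1)) (1:ℝ)) - v))ᗮ,
        Submodule.reflection_sub (by rw [hu, hv])⟩
  have hOnorm : ∀ z, ‖O z‖ = ‖z‖ := O.norm_map
  have hOB : ∀ z : EuclideanSpace ℝ (Fin (m+1)),
      z ∈ closedBall (0 : EuclideanSpace ℝ (Fin (m+1))) 1 ↔
      O z ∈ closedBall (0 : EuclideanSpace ℝ (Fin (m+1))) 1 := by
    intro z
    simp only [mem_closedBall_zero_iff, hOnorm]
  have hU₂ : IsOpen (⇑O ⁻¹' U) := hU.preimage O.continuous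
  have hBU₂ : closedBall (0 : EuclideanSpace ℝ (Fin (m+1))) 1 ⊆ ⇑O ⁻¹' U :=
    fun z hz => hBU ((hOB z).1 hz)
  have hψ₂ : ContDiffOn ℝ 1 (fun z => ψ (O z)) (⇑O ⁻¹' U) :=
    hψ.comp (O.contDiff.contDiffOn) (fun z hz => hz)
  have hbd₂ : ∀ z ∈ sphere (0 : EuclideanSpace ℝ (Fin (m+1))) 1,
      (fun z => ψ (O z)) z = (L ∘ₗ (O.toLinearEquiv : EuclideanSpace ℝ (Fin (m+1)) →ₗ[ℝ]
        EuclideanSpace ℝ (Fin (m+1)))) z := by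
    intro z hz
    have hz2 : O z ∈ sphere (0 : EuclideanSpace ℝ (Fin (m+1))) 1 := by
      rw [mem_sphere_zero_iff_norm] at hz ⊢; rw [hOnorm, hz]
    simpa using hbd _ hz2
  have h0 := key_zero m (L ∘ₗ (O.toLinearEquiv : EuclideanSpace ℝ (Fin (m+1)) →ₗ[ℝ]
    EuclideanSpace ℝ (Fin (m+1)))) (fun z => ψ (O z)) (⇑O ⁻¹' U) hU₂ hBU₂ hψ₂ hbd₂
  have hdiff : ∀ z ∈ closedBall (0 : EuclideanSpace ℝ (Fin (m+1))) 1,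
      DifferentiableAt ℝ ψ z := fun z hz =>
    (hψ.differentiableOn one_ne_zero).differentiableAt (hU.mem_nhds (hBU hz))
  have hfd : ∀ z ∈ closedBall (0 : EuclideanSpace ℝ (Fin (m+1))) 1,
      fderiv ℝ (fun z => ψ (O z)) z = (fderiv ℝ ψ (O z)).comp
        (O.toContinuousLinearEquiv : EuclideanSpace ℝ (Fin (m+1)) →L[ℝ]
          EuclideanSpace ℝ (Fin (m+1))) := by
    intro z hz
    exact ((hdiff _ ((hOB z).1 hz)).hasFDerivAt.comp z
      ((O.toContinuousLinearEquiv : EuclideanSpace ℝ (Fin (m+1)) →L[ℝ]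
        EuclideanSpace ℝ (Fin (m+1))).hasFDerivAt)).fderiv
  have hcd₂ : ContinuousOn (fderiv ℝ (fun z => ψ (O z))) (⇑O ⁻¹' U) :=
    hψ₂.continuousOn_fderiv_of_isOpen hU₂ le_rfl
  have hI2 : IntegrableOn (fun z => fderiv ℝ (fun z => ψ (O z)) z
      (EuclideanSpace.single (0 : Fin (m+1)) (1:ℝ)))
      (closedBall (0 : EuclideanSpace ℝ (Fin (m+1))) 1) :=
    (((hcd₂.mono hBU₂).clm_apply continuousOn_const)).integrableOn_compact
      (isCompact_closedBall 0 1)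
  have h0' : ∫ z in closedBall (0 : EuclideanSpace ℝ (Fin (m+1))) 1,
      fderiv ℝ (fun z => ψ (O z)) z (EuclideanSpace.single (0 : Fin (m+1)) (1:ℝ))
      = (volume (closedBall (0 : EuclideanSpace ℝ (Fin (m+1))) 1)).toReal •
        (L ∘ₗ (O.toLinearEquiv : EuclideanSpace ℝ (Fin (m+1)) →ₗ[ℝ]
          EuclideanSpace ℝ (Fin (m+1)))) (EuclideanSpace.single (0 : Fin (m+1)) (1:ℝ)) := by
    have hconst : IntegrableOn (fun _ : EuclideanSpace ℝ (Fin (m+1)) =>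
        (L ∘ₗ (O.toLinearEquiv : EuclideanSpace ℝ (Fin (m+1)) →ₗ[ℝ]
          EuclideanSpace ℝ (Fin (m+1)))) (EuclideanSpace.single (0 : Fin (m+1)) (1:ℝ)))
        (closedBall (0 : EuclideanSpace ℝ (Fin (m+1))) 1) :=
      integrableOn_const measure_closedBall_lt_top.ne
    have hsub := integral_sub hI2 hconst
    rw [hsub, sub_eq_zero] at h0
    rw [h0, setIntegral_const, measureReal_def]
  have hLu : (L ∘ₗ (O.toLinearEquiv : EuclideanSpace ℝ (Fin (m+1)) →ₗ[ℝ]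
      EuclideanSpace ℝ (Fin (m+1)))) (EuclideanSpace.single (0 : Fin (m+1)) (1:ℝ)) = L v := by
    have : ((O.toLinearEquiv : EuclideanSpace ℝ (Fin (m+1)) →ₗ[ℝ]
        EuclideanSpace ℝ (Fin (m+1)))) (EuclideanSpace.single (0 : Fin (m+1)) (1:ℝ))
        = O (EuclideanSpace.single (0 : Fin (m+1)) (1:ℝ)) := rfl
    simp only [LinearMap.coe_comp, Function.comp_apply]
    rw [this, hO]
  have hfd' : ∫ z in closedBall (0 : EuclideanSpace ℝ (Fin (m+1))) 1,
      fderiv ℝ (fun z => ψ (O z)) z (EuclideanSpace.single (0 : Fin (m+1)) (1:ℝ))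
      = ∫ z in closedBall (0 : EuclideanSpace ℝ (Fin (m+1))) 1, fderiv ℝ ψ (O z) v := by
    refine setIntegral_congr_fun measurableSet_closedBall ?_
    intro z hz
    show fderiv ℝ (fun w => ψ (O w)) z (EuclideanSpace.single (0 : Fin (m+1)) (1:ℝ))
      = fderiv ℝ ψ (O z) v
    rw [hfd z hz]
    simp only [ContinuousLinearMap.coe_comp', Function.comp_apply]
    have : (O.toContinuousLinearEquiv : EuclideanSpace ℝ (Fin (m+1)) →L[ℝ]
        EuclideanSpace ℝ (Fin (m+1))) (EuclideanSpace.single (0 : Fin (m+1)) (1:ℝ))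
        = O (EuclideanSpace.single (0 : Fin (m+1)) (1:ℝ)) := rfl
    rw [this, hO]
  have hcv : ∫ z in closedBall (0 : EuclideanSpace ℝ (Fin (m+1))) 1, fderiv ℝ ψ (O z) v
      = ∫ z in closedBall (0 : EuclideanSpace ℝ (Fin (m+1))) 1, fderiv ℝ ψ z v := by
    have mp : MeasurePreserving O volume volume := O.measurePreserving
    have emb : MeasurableEmbedding O := O.toHomeomorph.measurableEmbedding
    have hpre : ⇑O ⁻¹' (closedBall (0 : EuclideanSpace ℝ (Fin (m+1))) 1)
        = closedBall (0 : EuclideanSpace ℝ (Fin (m+1))) 1 := by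
      ext z
      simp only [Set.mem_preimage]
      exact (hOB z).symm
    calc ∫ z in closedBall (0 : EuclideanSpace ℝ (Fin (m+1))) 1, fderiv ℝ ψ (O z) v
        = ∫ z in ⇑O ⁻¹' (closedBall (0 : EuclideanSpace ℝ (Fin (m+1))) 1),
            fderiv ℝ ψ (O z) v := by rw [hpre]
      _ = ∫ z in closedBall (0 : EuclideanSpace ℝ (Fin (m+1))) 1, fderiv ℝ ψ z v :=
          mp.setIntegral_preimage_emb emb (fun z => fderiv ℝ ψ z v) (closedBall 0 1)
  rw [← hcv, ← hfd', h0', hLu]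

lemma exists_sphere_opNorm (n : ℕ) (hn : 1 ≤ n) {Y : Type*} [NormedAddCommGroup Y]
    [NormedSpace ℝ Y] (A : EuclideanSpace ℝ (Fin n) →L[ℝ] Y) :
    ∃ v ∈ sphere (0 : EuclideanSpace ℝ (Fin n)) 1, ‖A‖ = ‖A v‖ := by
  haveI : NeZero n := ⟨by omega⟩
  have hne : (sphere (0 : EuclideanSpace ℝ (Fin n)) 1).Nonempty :=
    ⟨EuclideanSpace.single 0 1, by simp [mem_sphere_zero_iff_norm, EuclideanSpace.norm_single]⟩
  obtain ⟨w, hw, hwmax'⟩ := (isCompact_sphere (0 : EuclideanSpace ℝ (Fin n)) 1).exists_isMaxOn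
    hne ((A.continuous.norm).continuousOn)
  have hwmax : ∀ x ∈ sphere (0 : EuclideanSpace ℝ (Fin n)) 1, ‖A x‖ ≤ ‖A w‖ := hwmax'
  have hwn : ‖w‖ = 1 := mem_sphere_zero_iff_norm.1 hw
  refine ⟨w, hw, le_antisymm (A.opNorm_le_bound (norm_nonneg _) fun x => ?_)
    (A.unit_le_opNorm w hwn.le)⟩
  rcases eq_or_ne x 0 with rfl | hx
  · simp
  · have hxn : ‖x‖ ≠ 0 := norm_ne_zero_iff.2 hx
    have hmem : (‖x‖⁻¹ • x) ∈ sphere (0 : EuclideanSpace ℝ (Fin n)) 1 := by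
      simp [mem_sphere_zero_iff_norm, norm_smul, abs_of_nonneg (inv_nonneg.2 (norm_nonneg x)),
        inv_mul_cancel₀ hxn]
    have h2 := hwmax _ hmem
    rw [A.map_smul, norm_smul, norm_inv, norm_norm] at h2
    calc ‖A x‖ = ‖x‖ * (‖x‖⁻¹ * ‖A x‖) := by field_simp
      _ ≤ ‖x‖ * ‖A w‖ := mul_le_mul_of_nonneg_left (by simpa using h2) (norm_nonneg x)
      _ = ‖A w‖ * ‖x‖ := mul_comm _ _

lemma key_jensen (m : ℕ) {Y : Type*} [NormedAddCommGroup Y] [NormedSpace ℝ Y] [CompleteSpace Y]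
    (p : ℝ) (hp : 1 ≤ p)
    (L : EuclideanSpace ℝ (Fin (m+1)) →ₗ[ℝ] Y) (ψ : EuclideanSpace ℝ (Fin (m+1)) → Y)
    (U : Set (EuclideanSpace ℝ (Fin (m+1)))) (hU : IsOpen U)
    (hBU : closedBall (0 : EuclideanSpace ℝ (Fin (m+1))) 1 ⊆ U)
    (hψ : ContDiffOn ℝ 1 ψ U)
    (hbd : ∀ z ∈ sphere (0 : EuclideanSpace ℝ (Fin (m+1))) 1, ψ z = L z)
    (v : EuclideanSpace ℝ (Fin (m+1))) (hv : ‖v‖ = 1) :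
    (volume (closedBall (0 : EuclideanSpace ℝ (Fin (m+1))) 1)).toReal * ‖L v‖ ^ p ≤
      ∫ z in closedBall (0 : EuclideanSpace ℝ (Fin (m+1))) 1, ‖fderiv ℝ ψ z v‖ ^ p := by
  have hp0 : 0 ≤ p := le_trans zero_le_one hp
  set B : Set (EuclideanSpace ℝ (Fin (m+1))) := closedBall 0 1 with hBdef
  have hvolpos : 0 < (volume B).toReal :=
    ENNReal.toReal_pos (measure_closedBall_pos volume _ one_pos).ne' measure_closedBall_lt_top.ne
  set μ : Measure (EuclideanSpace ℝ (Fin (m+1))) := volume.restrict B with hμdef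
  have hμuniv : μ Set.univ = volume B := by rw [hμdef, Measure.restrict_apply_univ]
  haveI : IsFiniteMeasure μ := ⟨by rw [hμuniv]; exact measure_closedBall_lt_top⟩
  haveI : NeZero μ := ⟨fun h => by
    have := hμuniv
    rw [h] at this
    simp only [Measure.coe_zero, Pi.zero_apply] at this
    exact (measure_closedBall_pos volume (0 : EuclideanSpace ℝ (Fin (m+1))) one_pos).ne'
      this.symm⟩
  have hcd : ContinuousOn (fderiv ℝ ψ) U := hψ.continuousOn_fderiv_of_isOpen hU le_rfl
  have hfc : ContinuousOn (fun z => ‖fderiv ℝ ψ z v‖) B :=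
    ((hcd.mono hBU).clm_apply continuousOn_const).norm
  have hfi : Integrable (fun z => ‖fderiv ℝ ψ z v‖) μ :=
    hfc.integrableOn_compact (isCompact_closedBall 0 1)
  have hgi : Integrable (fun z => ‖fderiv ℝ ψ z v‖ ^ p) μ :=
    (hfc.rpow_const (fun x _ => Or.inr hp0)).integrableOn_compact (isCompact_closedBall 0 1)
  have hkey := key_dir m L ψ U hU hBU hψ hbd v hv
  have hnormle : (volume B).toReal * ‖L v‖ ≤ ∫ z in B, ‖fderiv ℝ ψ z v‖ := by
    calc (volume B).toReal * ‖L v‖ = ‖(volume B).toReal • L v‖ := by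
          rw [norm_smul, Real.norm_eq_abs, abs_of_nonneg hvolpos.le]
      _ = ‖∫ z in B, fderiv ℝ ψ z v‖ := by rw [hkey]
      _ ≤ ∫ z in B, ‖fderiv ℝ ψ z v‖ := norm_integral_le_integral_norm _
  have havg : ‖L v‖ ≤ ⨍ z, ‖fderiv ℝ ψ z v‖ ∂μ := by
    rw [average_eq, measureReal_def, hμuniv, smul_eq_mul]
    rw [← (mul_le_mul_iff_right₀ hvolpos)]
    calc (volume B).toReal * ‖L v‖ ≤ ∫ z in B, ‖fderiv ℝ ψ z v‖ := hnormle
      _ = (volume B).toReal * ((volume B).toReal⁻¹ * ∫ z in B, ‖fderiv ℝ ψ z v‖) := by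
          field_simp
  have hjensen : (⨍ z, ‖fderiv ℝ ψ z v‖ ∂μ) ^ p ≤ ⨍ z, ‖fderiv ℝ ψ z v‖ ^ p ∂μ := by
    have := (convexOn_rpow hp).map_average_le
      (f := fun z => ‖fderiv ℝ ψ z v‖) (μ := μ)
      (continuousOn_id.rpow_const (fun x hx => Or.inr hp0)) isClosed_Ici
      (Filter.Eventually.of_forall fun x => Set.mem_Ici.2 (norm_nonneg _)) hfi hgi
    simpa using this
  calc (volume B).toReal * ‖L v‖ ^ p
      ≤ (volume B).toReal * (⨍ z, ‖fderiv ℝ ψ z v‖ ∂μ) ^ p := by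
        exact mul_le_mul_of_nonneg_left
          (Real.rpow_le_rpow (norm_nonneg _) havg hp0) hvolpos.le
    _ ≤ (volume B).toReal * ⨍ z, ‖fderiv ℝ ψ z v‖ ^ p ∂μ :=
        mul_le_mul_of_nonneg_left hjensen hvolpos.le
    _ = ∫ z in B, ‖fderiv ℝ ψ z v‖ ^ p := by
        rw [average_eq, measureReal_def, hμuniv, smul_eq_mul]
        field_simp
        rfl

/-- Quasi-convexity of `𝓘^p_+`: for `Y` a finite-dimensional normed space, `B` the
closed Euclidean unit ball in `ℝⁿ`, `L : ℝⁿ → Y` linear, and `ψ` a `C¹` map on a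
neighborhood of `B` with `ψ = L` on `∂B`:
`ω_n·𝓘^p_+(‖·‖ ∘ L) ≤ ∫_B 𝓘^p_+(‖·‖ ∘ d_zψ) dLⁿ(z)`. -/
theorem Iplus_quasiconvex (n : ℕ) (hn : 1 ≤ n)
    {Y : Type*} [NormedAddCommGroup Y] [NormedSpace ℝ Y] [FiniteDimensional ℝ Y]
    (p : ℝ) (hp : 1 ≤ p)
    (L : EuclideanSpace ℝ (Fin n) →ₗ[ℝ] Y) (ψ : EuclideanSpace ℝ (Fin n) → Y)
    (U : Set (EuclideanSpace ℝ (Fin n))) (hU : IsOpen U)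
    (hBU : closedBall (0 : EuclideanSpace ℝ (Fin n)) 1 ⊆ U)
    (hψ : ContDiffOn ℝ 1 ψ U)
    (hbd : ∀ z ∈ sphere (0 : EuclideanSpace ℝ (Fin n)) 1, ψ z = L z) :
    (volume (closedBall (0 : EuclideanSpace ℝ (Fin n)) 1)).toReal *
        Iplus n p ((normSeminorm ℝ Y).comp L) ≤
      ∫ z in closedBall (0 : EuclideanSpace ℝ (Fin n)) 1,
        Iplus n p ((normSeminorm ℝ Y).comp (fderiv ℝ ψ z).toLinearMap) := by
  obtain ⟨m, rfl⟩ : ∃ m, n = m + 1 := ⟨n - 1, by omega⟩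
  have hp0 : 0 ≤ p := le_trans zero_le_one hp
  have hLc : ((LinearMap.toContinuousLinearMap L) : EuclideanSpace ℝ (Fin (m+1)) →ₗ[ℝ] Y) = L :=
    LinearMap.coe_toContinuousLinearMap L
  rw [← hLc, Iplus_comp_clm (m+1) (by omega) p hp (LinearMap.toContinuousLinearMap L)]
  simp only [Iplus_comp_clm (m+1) (by omega) p hp]
  obtain ⟨v, hv, hnv⟩ := exists_sphere_opNorm (m+1) (by omega) (LinearMap.toContinuousLinearMap L)
  have hv1 : ‖v‖ = 1 := mem_sphere_zero_iff_norm.1 hv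
  have hLv : (LinearMap.toContinuousLinearMap L) v = L v := rfl
  have h1 := key_jensen m p hp L ψ U hU hBU hψ hbd v hv1
  have hcd : ContinuousOn (fderiv ℝ ψ) U := hψ.continuousOn_fderiv_of_isOpen hU le_rfl
  have hIf : IntegrableOn (fun z => ‖fderiv ℝ ψ z v‖ ^ p)
      (closedBall (0 : EuclideanSpace ℝ (Fin (m+1))) 1) :=
    ((((hcd.mono hBU).clm_apply continuousOn_const).norm).rpow_const
      (fun x _ => Or.inr hp0)).integrableOn_compact (isCompact_closedBall 0 1)
  have hIg : IntegrableOn (fun z => ‖fderiv ℝ ψ z‖ ^ p)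
      (closedBall (0 : EuclideanSpace ℝ (Fin (m+1))) 1) :=
    (((hcd.mono hBU).norm).rpow_const
      (fun x _ => Or.inr hp0)).integrableOn_compact (isCompact_closedBall 0 1)
  have h2 : (∫ z in closedBall (0 : EuclideanSpace ℝ (Fin (m+1))) 1, ‖fderiv ℝ ψ z v‖ ^ p)
      ≤ ∫ z in closedBall (0 : EuclideanSpace ℝ (Fin (m+1))) 1, ‖fderiv ℝ ψ z‖ ^ p := by
    refine setIntegral_mono_on hIf hIg measurableSet_closedBall ?_
    intro z hz
    exact Real.rpow_le_rpow (norm_nonneg _) ((fderiv ℝ ψ z).unit_le_opNorm v hv1.le) hp0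
  calc (volume (closedBall (0 : EuclideanSpace ℝ (Fin (m+1))) 1)).toReal *
      ‖LinearMap.toContinuousLinearMap L‖ ^ p
      = (volume (closedBall (0 : EuclideanSpace ℝ (Fin (m+1))) 1)).toReal * ‖L v‖ ^ p := by
        rw [hnv, hLv]
    _ ≤ ∫ z in closedBall (0 : EuclideanSpace ℝ (Fin (m+1))) 1, ‖fderiv ℝ ψ z v‖ ^ p := h1
    _ ≤ ∫ z in closedBall (0 : EuclideanSpace ℝ (Fin (m+1))) 1, ‖fderiv ℝ ψ z‖ ^ p := h2
end
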